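/- arXiv:2002.08459 — 10 statements merged into one kernel-verified Lean document; each statement's English description precedes it below -/
import Mathlib

section
/- Let α, β ∈ (0,1) with α + β < 1. There exists a constant C depending only on α and β such that for all continuous 2π-periodic functions f, g : ℝ → ℝ, if f is α-Hölder with constant C_f and g is β-Hölder with constant C_g, then their circle convolution h satisfies |h(t) − h(s)| ≤ C · C_f · C_g · |t − s|^(α+β) for all t, s ∈ ℝ. -/
open intervalIntegral Real MeasureTheory

lemma per_shift {F : ℝ → ℝ} (hF : Function.Periodic F (2*Real.pi)) (a : ℝ) :
    ∫ x in a..(a + 2*Real.pi), F x = ∫ x in (0:ℝ)..(2*Real.pi), F x := by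
  simpa using hF.intervalIntegral_add_eq a 0

lemma conv_per {f g : ℝ → ℝ} (hfp : Function.Periodic f (2*Real.pi))
    (hgp : Function.Periodic g (2*Real.pi)) (c : ℝ) :
    Function.Periodic (fun x => f x * g (c - x)) (2*Real.pi) := by
  intro x
  have h2 := hgp (c - x - 2*Real.pi)
  rw [show c - x - 2*Real.pi + 2*Real.pi = c - x by ring] at h2
  simp only [hfp x, show c - (x + 2*Real.pi) = c - x - 2*Real.pi by ring, ← h2]

lemma conv_flip {f g : ℝ → ℝ} (hfp : Function.Periodic f (2*Real.pi))
    (hgp : Function.Periodic g (2*Real.pi)) (c : ℝ) :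
    ∫ y in (0:ℝ)..(2*Real.pi), f (c - y) * g y = ∫ x in (0:ℝ)..(2*Real.pi), f x * g (c - x) := by
  calc ∫ y in (0:ℝ)..(2*Real.pi), f (c - y) * g y
      = ∫ x in (c - 2*Real.pi)..(c - 0), (fun x => f x * g (c - x)) x := by
        simpa using intervalIntegral.integral_comp_sub_left
          (a := (0:ℝ)) (b := 2*Real.pi) (fun x => f x * g (c - x)) c
    _ = ∫ x in (0:ℝ)..(2*Real.pi), f x * g (c - x) := by
        have := per_shift (conv_per hfp hgp c) (c - 2*Real.pi)
        rw [show c - 2*Real.pi + 2*Real.pi = c by ring] at this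
        rw [sub_zero]; exact this

lemma sub_per {f : ℝ → ℝ} (hfp : Function.Periodic f (2*Real.pi)) (c : ℝ) :
    Function.Periodic (fun z => f (c - z)) (2*Real.pi) := by
  intro z
  have h2 := hfp (c - z - 2*Real.pi)
  rw [show c - z - 2*Real.pi + 2*Real.pi = c - z by ring] at h2
  simpa [show c - (z + 2*Real.pi) = c - z - 2*Real.pi by ring] using h2.symm ▸ rfl

lemma conv_flip_shift {f g : ℝ → ℝ} (hfp : Function.Periodic f (2*Real.pi))
    (hgp : Function.Periodic g (2*Real.pi)) (c δ : ℝ) :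
    ∫ y in (0:ℝ)..(2*Real.pi), f (c - y) * g (y - δ)
      = ∫ x in (0:ℝ)..(2*Real.pi), f x * g ((c - δ) - x) := by
  have hG : Function.Periodic (fun z => f ((c - δ) - z) * g z) (2*Real.pi) :=
    (sub_per hfp (c - δ)).mul hgp
  calc ∫ y in (0:ℝ)..(2*Real.pi), f (c - y) * g (y - δ)
      = ∫ y in (0:ℝ)..(2*Real.pi), (fun z => f ((c - δ) - z) * g z) (y - δ) := by
        apply intervalIntegral.integral_congr
        intro y _
        simp only
        rw [show c - δ - (y - δ) = c - y by ring]
    _ = ∫ z in (-δ)..(2*Real.pi - δ), (fun z => f ((c - δ) - z) * g z) z := by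
        simpa using intervalIntegral.integral_comp_sub_right
          (a := (0:ℝ)) (b := 2*Real.pi) (fun z => f ((c - δ) - z) * g z) δ
    _ = ∫ z in (0:ℝ)..(2*Real.pi), f ((c - δ) - z) * g z := by
        have := per_shift hG (-δ)
        rw [show -δ + 2*Real.pi = 2*Real.pi - δ by ring] at this
        exact this
    _ = ∫ x in (0:ℝ)..(2*Real.pi), f x * g ((c - δ) - x) := conv_flip hfp hgp (c - δ)

lemma second_diff {f g : ℝ → ℝ} (hfc : Continuous f) (hgc : Continuous g)
    (hfp : Function.Periodic f (2*Real.pi)) (hgp : Function.Periodic g (2*Real.pi)) (t δ : ℝ) :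
    ∫ y in (0:ℝ)..(2*Real.pi), (f (t + δ - y) - f (t - y)) * (g y - g (y - δ))
      = (∫ x in (0:ℝ)..(2*Real.pi), f x * g (t + δ - x))
        - 2 * (∫ x in (0:ℝ)..(2*Real.pi), f x * g (t - x))
        + ∫ x in (0:ℝ)..(2*Real.pi), f x * g (t - δ - x) := by
  have i1 : IntervalIntegrable (fun y => f (t + δ - y) * g y) MeasureTheory.volume 0 (2*Real.pi) :=
    (Continuous.intervalIntegrable (by fun_prop) _ _)
  have i2 : IntervalIntegrable (fun y => f (t + δ - y) * g (y - δ)) MeasureTheory.volume 0 (2*Real.pi) :=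
    (Continuous.intervalIntegrable (by fun_prop) _ _)
  have i3 : IntervalIntegrable (fun y => f (t - y) * g y) MeasureTheory.volume 0 (2*Real.pi) :=
    (Continuous.intervalIntegrable (by fun_prop) _ _)
  have i4 : IntervalIntegrable (fun y => f (t - y) * g (y - δ)) MeasureTheory.volume 0 (2*Real.pi) :=
    (Continuous.intervalIntegrable (by fun_prop) _ _)
  calc ∫ y in (0:ℝ)..(2*Real.pi), (f (t + δ - y) - f (t - y)) * (g y - g (y - δ))
      = ∫ y in (0:ℝ)..(2*Real.pi),
          ((fun y => f (t + δ - y) * g y) y - (fun y => f (t + δ - y) * g (y - δ)) y)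
          - ((fun y => f (t - y) * g y) y - (fun y => f (t - y) * g (y - δ)) y) := by
        apply intervalIntegral.integral_congr; intro y _; simp only; ring
    _ = ((∫ y in (0:ℝ)..(2*Real.pi), f (t + δ - y) * g y)
          - ∫ y in (0:ℝ)..(2*Real.pi), f (t + δ - y) * g (y - δ))
        - ((∫ y in (0:ℝ)..(2*Real.pi), f (t - y) * g y)
          - ∫ y in (0:ℝ)..(2*Real.pi), f (t - y) * g (y - δ)) := by
        rw [intervalIntegral.integral_sub (i1.sub i2) (i3.sub i4),
          intervalIntegral.integral_sub i1 i2, intervalIntegral.integral_sub i3 i4]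
    _ = _ := by
        rw [conv_flip hfp hgp (t + δ), conv_flip hfp hgp t,
          conv_flip_shift hfp hgp (t + δ) δ, conv_flip_shift hfp hgp t δ,
          show t + δ - δ = t by ring]
        ring

lemma sd_bound {f g : ℝ → ℝ} {Cf Cg α β : ℝ} (hCf : 0 ≤ Cf) (hCg : 0 ≤ Cg)
    (hfc : Continuous f) (hgc : Continuous g)
    (hfp : Function.Periodic f (2*Real.pi)) (hgp : Function.Periodic g (2*Real.pi))
    (hf : ∀ x y, |f x - f y| ≤ Cf * |x - y| ^ α)
    (hg : ∀ x y, |g x - g y| ≤ Cg * |x - y| ^ β)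
    (hαβ : α + β ≠ 0) (t δ : ℝ) :
    |(∫ x in (0:ℝ)..(2*Real.pi), f x * g (t + δ - x))
        - 2 * (∫ x in (0:ℝ)..(2*Real.pi), f x * g (t - x))
        + ∫ x in (0:ℝ)..(2*Real.pi), f x * g (t - δ - x)|
      ≤ 2 * Real.pi * (Cf * Cg * |δ| ^ (α + β)) := by
  rw [← second_diff hfc hgc hfp hgp t δ]
  have key : ∀ y ∈ Set.uIoc (0:ℝ) (2*Real.pi),
      ‖(f (t + δ - y) - f (t - y)) * (g y - g (y - δ))‖ ≤ Cf * Cg * |δ| ^ (α + β) := by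
    intro y _
    rw [Real.norm_eq_abs, abs_mul]
    have h1 : |f (t + δ - y) - f (t - y)| ≤ Cf * |δ| ^ α := by
      have := hf (t + δ - y) (t - y)
      rwa [show t + δ - y - (t - y) = δ by ring] at this
    have h2 : |g y - g (y - δ)| ≤ Cg * |δ| ^ β := by
      have := hg y (y - δ)
      rwa [show y - (y - δ) = δ by ring] at this
    calc |f (t + δ - y) - f (t - y)| * |g y - g (y - δ)|
        ≤ (Cf * |δ| ^ α) * (Cg * |δ| ^ β) :=
          mul_le_mul h1 h2 (abs_nonneg _) (mul_nonneg hCf (Real.rpow_nonneg (abs_nonneg _) _))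
      _ = Cf * Cg * |δ| ^ (α + β) := by
          rw [Real.rpow_add' (abs_nonneg δ) hαβ]; ring
  have := intervalIntegral.norm_integral_le_of_norm_le_const key
  rw [Real.norm_eq_abs] at this
  calc |∫ y in (0:ℝ)..(2*Real.pi), (f (t + δ - y) - f (t - y)) * (g y - g (y - δ))|
      ≤ Cf * Cg * |δ| ^ (α + β) * |2*Real.pi - 0| := this
    _ = 2 * Real.pi * (Cf * Cg * |δ| ^ (α + β)) := by
        rw [sub_zero, abs_of_pos Real.two_pi_pos]; ring

lemma fd_bound {f g : ℝ → ℝ} {Cg β Mf : ℝ}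
    (hfc : Continuous f) (hgc : Continuous g)
    (hg : ∀ x y, |g x - g y| ≤ Cg * |x - y| ^ β)
    (hMf0 : 0 ≤ Mf) (hMf : ∀ x, |f x| ≤ Mf) (t s : ℝ) :
    |(∫ x in (0:ℝ)..(2*Real.pi), f x * g (t - x))
        - ∫ x in (0:ℝ)..(2*Real.pi), f x * g (s - x)|
      ≤ 2 * Real.pi * (Mf * (Cg * |t - s| ^ β)) := by
  have i1 : IntervalIntegrable (fun x => f x * g (t - x)) MeasureTheory.volume 0 (2*Real.pi) :=
    (Continuous.intervalIntegrable (by fun_prop) _ _)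
  have i2 : IntervalIntegrable (fun x => f x * g (s - x)) MeasureTheory.volume 0 (2*Real.pi) :=
    (Continuous.intervalIntegrable (by fun_prop) _ _)
  rw [← intervalIntegral.integral_sub i1 i2]
  have key : ∀ x ∈ Set.uIoc (0:ℝ) (2*Real.pi),
      ‖f x * g (t - x) - f x * g (s - x)‖ ≤ Mf * (Cg * |t - s| ^ β) := by
    intro x _
    rw [Real.norm_eq_abs, ← mul_sub, abs_mul]
    have h2 : |g (t - x) - g (s - x)| ≤ Cg * |t - s| ^ β := by
      have := hg (t - x) (s - x)
      rwa [show t - x - (s - x) = t - s by ring] at this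
    exact mul_le_mul (hMf x) h2 (abs_nonneg _) hMf0
  have := intervalIntegral.norm_integral_le_of_norm_le_const key
  rw [Real.norm_eq_abs] at this
  calc |∫ x in (0:ℝ)..(2*Real.pi), (f x * g (t - x) - f x * g (s - x))|
      ≤ Mf * (Cg * |t - s| ^ β) * |2*Real.pi - 0| := this
    _ = 2 * Real.pi * (Mf * (Cg * |t - s| ^ β)) := by
        rw [sub_zero, abs_of_pos Real.two_pi_pos]; ring

lemma per_bound {f : ℝ → ℝ} (hfc : Continuous f) (hfp : Function.Periodic f (2*Real.pi)) :
    ∃ M : ℝ, 0 ≤ M ∧ ∀ x, |f x| ≤ M := by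
  obtain ⟨M, hM⟩ := (isCompact_Icc (a := (0:ℝ)) (b := 2*Real.pi)).exists_bound_of_continuousOn
    hfc.continuousOn
  refine ⟨max M 0, le_max_right _ _, fun x => ?_⟩
  obtain ⟨y, hy, hxy⟩ := hfp.exists_mem_Ico₀ Real.two_pi_pos x
  rw [hxy]
  exact le_trans (le_of_eq (Real.norm_eq_abs _).symm)
    (le_trans (hM y (Set.Ico_subset_Icc_self hy)) (le_max_left _ _))

open Filter Topology in
lemma key_est {f g : ℝ → ℝ} {Cf Cg α β : ℝ} (hα : α ∈ Set.Ioo (0:ℝ) 1) (hβ : β ∈ Set.Ioo (0:ℝ) 1)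
    (hαβ : α + β < 1) (hCf : 0 ≤ Cf) (hCg : 0 ≤ Cg)
    (hfc : Continuous f) (hgc : Continuous g)
    (hfp : ∀ x, f (x + 2 * Real.pi) = f x) (hgp : ∀ x, g (x + 2 * Real.pi) = g x)
    (hf : ∀ x y, |f x - f y| ≤ Cf * |x - y| ^ α)
    (hg : ∀ x y, |g x - g y| ≤ Cg * |x - y| ^ β)
    {H : ℝ → ℝ} (hH : ∀ t, H t = ∫ x in (0:ℝ)..(2*Real.pi), f x * g (t - x))
    (s δ : ℝ) (hδ : 0 < δ) :
    |H (s + δ) - H s| ≤ Real.pi * (1 - (2:ℝ)^(α+β)/2)⁻¹ * Cf * Cg * δ ^ (α+β) := by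
  obtain ⟨hα0, hα1⟩ := hα
  obtain ⟨hβ0, hβ1⟩ := hβ
  have hγ0 : 0 < α + β := by linarith
  have hfpP : Function.Periodic f (2*Real.pi) := hfp
  have hgpP : Function.Periodic g (2*Real.pi) := hgp
  obtain ⟨Mf, hMf0, hMf⟩ := per_bound hfc hfpP
  have hr1 : (2:ℝ)^(α+β)/2 < 1 := by
    have : (2:ℝ)^(α+β) < 2^(1:ℝ) := Real.rpow_lt_rpow_of_exponent_lt one_lt_two hαβ
    rw [Real.rpow_one] at this; linarith
  have hr'0 : (0:ℝ) ≤ (2:ℝ)^β/2 := by positivity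
  have hr'1 : (2:ℝ)^β/2 < 1 := by
    have : (2:ℝ)^β < 2^(1:ℝ) := Real.rpow_lt_rpow_of_exponent_lt one_lt_two hβ1
    rw [Real.rpow_one] at this; linarith
  have hpow : ∀ (θ : ℝ) (n : ℕ), ((2:ℝ)^n * δ) ^ θ = ((2:ℝ)^θ)^n * δ^θ := by
    intro θ n
    rw [Real.mul_rpow (by positivity) hδ.le, ← Real.rpow_natCast (2:ℝ) n,
      ← Real.rpow_natCast ((2:ℝ)^θ) n, ← Real.rpow_mul (by norm_num),
      ← Real.rpow_mul (by norm_num), mul_comm (n:ℝ) θ]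
  have hE : ∀ n : ℕ, |H (s + 2^(n+1)*δ) - 2*H (s + 2^n*δ) + H s|
      ≤ 2*Real.pi*(Cf*Cg*(((2:ℝ)^(α+β))^n * δ^(α+β))) := by
    intro n
    have h0 := sd_bound hCf hCg hfc hgc hfpP hgpP hf hg (ne_of_gt hγ0) (s + 2^n*δ) (2^n*δ)
    rw [← hH, ← hH, ← hH] at h0
    rw [show s + 2^n*δ + 2^n*δ = s + 2^(n+1)*δ by ring,
      show s + 2^n*δ - 2^n*δ = s by ring,
      abs_of_pos (by positivity : (0:ℝ) < 2^n*δ), hpow (α+β) n] at h0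
    exact h0
  have hD : ∀ n : ℕ, |H (s + 2^n*δ) - H s| ≤ 2*Real.pi*(Mf*(Cg*(((2:ℝ)^β)^n * δ^β))) := by
    intro n
    have h0 := fd_bound hfc hgc hg hMf0 hMf (s + 2^n*δ) s
    rw [← hH, ← hH] at h0
    rw [show s + 2^n*δ - s = 2^n*δ by ring,
      abs_of_pos (by positivity : (0:ℝ) < 2^n*δ), hpow β n] at h0
    exact h0
  have hInd : ∀ n : ℕ, |H (s + 2^(0:ℕ)*δ) - H s| ≤ (1/2:ℝ)^n * |H (s + 2^n*δ) - H s|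
      + (Real.pi*(Cf*(Cg*δ^(α+β)))) * ∑ k ∈ Finset.range n, ((2:ℝ)^(α+β)/2)^k := by
    intro n
    induction n with
    | zero => simp
    | succ n ih =>
      have hstep : |H (s + 2^n*δ) - H s| ≤ (1/2) * |H (s + 2^(n+1)*δ) - H s|
          + (1/2)*(2*Real.pi*(Cf*Cg*(((2:ℝ)^(α+β))^n * δ^(α+β)))) := by
        have h1 := hE n
        have h2 : H (s + 2^n*δ) - H s
            = ((H (s + 2^(n+1)*δ) - H s) - (H (s + 2^(n+1)*δ) - 2*H (s + 2^n*δ) + H s))/2 := by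
          ring
        rw [h2]
        calc |((H (s + 2^(n+1)*δ) - H s) - (H (s + 2^(n+1)*δ) - 2*H (s + 2^n*δ) + H s))/2|
            ≤ (|H (s + 2^(n+1)*δ) - H s| + |H (s + 2^(n+1)*δ) - 2*H (s + 2^n*δ) + H s|)/2 := by
              rw [abs_div, abs_two]
              gcongr
              exact abs_sub _ _
          _ ≤ (1/2) * |H (s + 2^(n+1)*δ) - H s|
              + (1/2)*(2*Real.pi*(Cf*Cg*(((2:ℝ)^(α+β))^n * δ^(α+β)))) := by linarith
      have hmul : (1/2:ℝ)^n * |H (s + 2^n*δ) - H s|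
          ≤ (1/2:ℝ)^n * ((1/2) * |H (s + 2^(n+1)*δ) - H s|
            + (1/2)*(2*Real.pi*(Cf*Cg*(((2:ℝ)^(α+β))^n * δ^(α+β))))) :=
        mul_le_mul_of_nonneg_left hstep (by positivity)
      have hkey : (1/2:ℝ)^n * ((1/2)*(2*Real.pi*(Cf*Cg*(((2:ℝ)^(α+β))^n * δ^(α+β)))))
          = (Real.pi*(Cf*(Cg*δ^(α+β)))) * ((2:ℝ)^(α+β)/2)^n := by
        ring
      rw [Finset.sum_range_succ, mul_add]
      have h3 : (1/2:ℝ)^(n+1) * |H (s + 2^(n+1)*δ) - H s|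
          = (1/2:ℝ)^n * ((1/2) * |H (s + 2^(n+1)*δ) - H s|) := by ring
      rw [h3]
      calc |H (s + 2^(0:ℕ)*δ) - H s|
          ≤ (1/2:ℝ)^n * |H (s + 2^n*δ) - H s|
            + (Real.pi*(Cf*(Cg*δ^(α+β)))) * ∑ k ∈ Finset.range n, ((2:ℝ)^(α+β)/2)^k := ih
        _ ≤ _ := by
            rw [mul_add] at hmul
            rw [← hkey]
            linarith
  have hsum : ∀ n : ℕ, ∑ k ∈ Finset.range n, ((2:ℝ)^(α+β)/2)^k ≤ (1 - (2:ℝ)^(α+β)/2)⁻¹ := by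
    intro n
    rw [geom_sum_eq (ne_of_lt hr1)]
    rw [show ((2:ℝ)^(α+β)/2)^n - 1 = -(1 - ((2:ℝ)^(α+β)/2)^n) by ring,
      show (2:ℝ)^(α+β)/2 - 1 = -(1 - (2:ℝ)^(α+β)/2) by ring, neg_div_neg_eq, ← one_div]
    gcongr
    · have : (0:ℝ) ≤ ((2:ℝ)^(α+β)/2)^n := by positivity
      linarith
  have hfin : ∀ n : ℕ, |H (s + δ) - H s|
      ≤ (2*Real.pi*(Mf*(Cg*δ^β))) * ((2:ℝ)^β/2)^n
        + Real.pi * (1 - (2:ℝ)^(α+β)/2)⁻¹ * Cf * Cg * δ^(α+β) := by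
    intro n
    have h1 := hInd n
    rw [show s + 2^(0:ℕ)*δ = s + δ by norm_num] at h1
    refine h1.trans (add_le_add ?_ ?_)
    · calc (1/2:ℝ)^n * |H (s + 2^n*δ) - H s|
          ≤ (1/2:ℝ)^n * (2*Real.pi*(Mf*(Cg*(((2:ℝ)^β)^n * δ^β)))) :=
            mul_le_mul_of_nonneg_left (hD n) (by positivity)
        _ = (2*Real.pi*(Mf*(Cg*δ^β))) * ((2:ℝ)^β/2)^n := by ring
    · calc (Real.pi*(Cf*(Cg*δ^(α+β)))) * ∑ k ∈ Finset.range n, ((2:ℝ)^(α+β)/2)^k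
          ≤ (Real.pi*(Cf*(Cg*δ^(α+β)))) * (1 - (2:ℝ)^(α+β)/2)⁻¹ :=
            mul_le_mul_of_nonneg_left (hsum n) (by positivity)
        _ = Real.pi * (1 - (2:ℝ)^(α+β)/2)⁻¹ * Cf * Cg * δ^(α+β) := by ring
  have hlim : Tendsto (fun n : ℕ => (2*Real.pi*(Mf*(Cg*δ^β))) * ((2:ℝ)^β/2)^n
      + Real.pi * (1 - (2:ℝ)^(α+β)/2)⁻¹ * Cf * Cg * δ^(α+β)) atTop
      (𝓝 (Real.pi * (1 - (2:ℝ)^(α+β)/2)⁻¹ * Cf * Cg * δ^(α+β))) := by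
    have h0 : Tendsto (fun n : ℕ => ((2:ℝ)^β/2)^n) atTop (𝓝 0) :=
      tendsto_pow_atTop_nhds_zero_of_lt_one hr'0 hr'1
    have := (h0.const_mul (2*Real.pi*(Mf*(Cg*δ^β)))).add_const
      (Real.pi * (1 - (2:ℝ)^(α+β)/2)⁻¹ * Cf * Cg * δ^(α+β))
    simpa using this
  exact ge_of_tendsto' hlim hfin

/-- Regularity of circle convolution of Hölder functions, case `α + β < 1`:
the convolution is `(α+β)`-Hölder with a constant depending only on `α` and `β`. -/
theorem stmt_0 (α β : ℝ) (hα : α ∈ Set.Ioo (0:ℝ) 1) (hβ : β ∈ Set.Ioo (0:ℝ) 1)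
    (hαβ : α + β < 1) :
    ∃ C : ℝ, 0 < C ∧
      ∀ (f g : ℝ → ℝ) (Cf Cg : ℝ), 0 ≤ Cf → 0 ≤ Cg →
        Continuous f → Continuous g →
        (∀ x, f (x + 2 * Real.pi) = f x) →
        (∀ x, g (x + 2 * Real.pi) = g x) →
        (∀ x y, |f x - f y| ≤ Cf * |x - y| ^ α) →
        (∀ x y, |g x - g y| ≤ Cg * |x - y| ^ β) →
        ∀ t s : ℝ,
          |(∫ x in (0:ℝ)..(2 * Real.pi), f x * g (t - x)) -
            ∫ x in (0:ℝ)..(2 * Real.pi), f x * g (s - x)| ≤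
          C * Cf * Cg * |t - s| ^ (α + β) := by
  have hγ0 : 0 < α + β := by
    obtain ⟨h1, _⟩ := hα; obtain ⟨h2, _⟩ := hβ; linarith
  have hr1 : (2:ℝ)^(α+β)/2 < 1 := by
    have : (2:ℝ)^(α+β) < 2^(1:ℝ) := Real.rpow_lt_rpow_of_exponent_lt one_lt_two hαβ
    rw [Real.rpow_one] at this; linarith
  refine ⟨Real.pi * (1 - (2:ℝ)^(α+β)/2)⁻¹, by
    have : (0:ℝ) < (1 - (2:ℝ)^(α+β)/2)⁻¹ := by
      apply inv_pos.mpr; linarith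
    positivity, ?_⟩
  intro f g Cf Cg hCf hCg hfc hgc hfp hgp hf hg t s
  set H : ℝ → ℝ := fun t => ∫ x in (0:ℝ)..(2*Real.pi), f x * g (t - x) with hHdef
  have hH : ∀ t, H t = ∫ x in (0:ℝ)..(2*Real.pi), f x * g (t - x) := fun _ => rfl
  show |H t - H s| ≤ _
  rcases lt_trichotomy t s with hts | hts | hts
  · have := key_est hα hβ hαβ hCf hCg hfc hgc hfp hgp hf hg hH t (s - t) (by linarith)
    rw [show t + (s - t) = s by ring] at this
    rw [abs_sub_comm, show |t - s| = s - t by rw [abs_of_neg (by linarith)]; ring]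
    exact this
  · subst hts
    simp [sub_self, Real.zero_rpow (ne_of_gt hγ0)]
  · have := key_est hα hβ hαβ hCf hCg hfc hgc hfp hgp hf hg hH s (t - s) (by linarith)
    rw [show s + (t - s) = t by ring] at this
    rw [show |t - s| = t - s by rw [abs_of_pos (by linarith)]]
    exact this
end

section
/- Let α, β ∈ (0,1) with α + β = 1. There exists a constant C depending only on α and β such that for all continuous 2π-periodic functions f, g : ℝ → ℝ, if f is α-Hölder with constant C_f and g is β-Hölder with constant C_g, then their circle convolution h satisfies |h(t) − h(s)| ≤ C · C_f · C_g · |t − s| · |log |t − s|| for all t, s ∈ ℝ with 0 < |t − s| ≤ 1/2 (i.e., h has Zygmund-type modulus of continuity |t log t|). -/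
open intervalIntegral Real

private lemma conv_shift {f g : ℝ → ℝ}
    (hpf : ∀ x, f (x + 2 * Real.pi) = f x) (hpg : ∀ x, g (x + 2 * Real.pi) = g x)
    (s δ : ℝ) :
    (∫ x in (0:ℝ)..(2 * Real.pi), f x * g (s + δ - x)) =
      ∫ x in (0:ℝ)..(2 * Real.pi), f (x + δ) * g (s - x) := by
  have hper : Function.Periodic (fun x => f x * g (s + δ - x)) (2 * Real.pi) := by
    intro x
    have h1 : s + δ - (x + 2 * Real.pi) + 2 * Real.pi = s + δ - x := by ring
    have h2 := hpg (s + δ - (x + 2 * Real.pi))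
    rw [h1] at h2
    simp only [hpf x, ← h2]
  have h0 := hper.intervalIntegral_add_eq δ 0
  rw [zero_add] at h0
  have hbeta : ∀ x : ℝ, s + δ - (x + δ) = s - x := fun x => by ring
  calc (∫ x in (0:ℝ)..(2 * Real.pi), f x * g (s + δ - x))
      = ∫ x in δ..(δ + 2 * Real.pi), f x * g (s + δ - x) := h0.symm
    _ = ∫ x in (0 + δ)..(2 * Real.pi + δ), f x * g (s + δ - x) := by
        rw [zero_add, add_comm δ]
    _ = ∫ x in (0:ℝ)..(2 * Real.pi), f (x + δ) * g (s + δ - (x + δ)) :=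
        (intervalIntegral.integral_comp_add_right (fun x => f x * g (s + δ - x)) δ).symm
    _ = ∫ x in (0:ℝ)..(2 * Real.pi), f (x + δ) * g (s - x) := by
        simp only [hbeta]

private lemma conv_diff {f g : ℝ → ℝ} (hcf : Continuous f) (hcg : Continuous g)
    (hpf : ∀ x, f (x + 2 * Real.pi) = f x) (hpg : ∀ x, g (x + 2 * Real.pi) = g x)
    (s δ : ℝ) :
    (∫ x in (0:ℝ)..(2 * Real.pi), f x * g (s + δ - x)) -
      (∫ x in (0:ℝ)..(2 * Real.pi), f x * g (s - x)) =
      ∫ x in (0:ℝ)..(2 * Real.pi), (f (x + δ) - f x) * g (s - x) := by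
  have i1 : IntervalIntegrable (fun x => f (x + δ) * g (s - x)) MeasureTheory.volume 0 (2 * Real.pi) := by
    apply Continuous.intervalIntegrable
    exact ((hcf.comp (continuous_id.add continuous_const)).mul
      (hcg.comp (continuous_const.sub continuous_id)))
  have i2 : IntervalIntegrable (fun x => f x * g (s - x)) MeasureTheory.volume 0 (2 * Real.pi) := by
    apply Continuous.intervalIntegrable
    exact hcf.mul (hcg.comp (continuous_const.sub continuous_id))
  rw [conv_shift hpf hpg s δ, ← intervalIntegral.integral_sub i1 i2]
  congr 1
  funext x
  ring

/-- Regularity of circle convolution of Hölder functions, case `α + β = 1`: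
the convolution has Zygmund-type modulus of continuity `|t log t|`. -/
theorem stmt_1 (α β : ℝ) (hα : α ∈ Set.Ioo (0:ℝ) 1) (hβ : β ∈ Set.Ioo (0:ℝ) 1)
    (hαβ : α + β = 1) :
    ∃ C : ℝ, 0 < C ∧
      ∀ (f g : ℝ → ℝ) (Cf Cg : ℝ), 0 ≤ Cf → 0 ≤ Cg →
        Continuous f → Continuous g →
        (∀ x, f (x + 2 * Real.pi) = f x) →
        (∀ x, g (x + 2 * Real.pi) = g x) →
        (∀ x y, |f x - f y| ≤ Cf * |x - y| ^ α) →
        (∀ x y, |g x - g y| ≤ Cg * |x - y| ^ β) →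
        ∀ t s : ℝ, 0 < |t - s| → |t - s| ≤ 1 / 2 →
          |(∫ x in (0:ℝ)..(2 * Real.pi), f x * g (t - x)) -
            ∫ x in (0:ℝ)..(2 * Real.pi), f x * g (s - x)| ≤
          C * Cf * Cg * |t - s| * |Real.log (|t - s|)| := by
  obtain ⟨hα0, hα1⟩ := hα
  obtain ⟨hβ0, hβ1⟩ := hβ
  have hlog2 : (0:ℝ) < Real.log 2 := Real.log_pos one_lt_two
  refine ⟨(2 * (2 * Real.pi) ^ 2 + Real.pi) / Real.log 2, by positivity, ?_⟩
  intro f g Cf Cg hCf hCg hcf hcg hpf hpg hf hg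
  set H : ℝ → ℝ := fun t => ∫ x in (0:ℝ)..(2 * Real.pi), f x * g (t - x) with hH
  have hπ1 : (1:ℝ) ≤ 2 * Real.pi := by linarith [Real.pi_gt_three]
  -- the crude bound
  have hgconst : ∀ u : ℝ, (∫ x in (0:ℝ)..(2 * Real.pi), g (u - x)) =
      ∫ x in (0:ℝ)..(2 * Real.pi), g x := by
    intro u
    rw [intervalIntegral.integral_comp_sub_left g u]
    have hper : Function.Periodic g (2 * Real.pi) := hpg
    have := hper.intervalIntegral_add_eq (u - 2 * Real.pi) 0
    rw [zero_add, sub_add_cancel] at this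
    simpa using this
  have hcrude : ∀ t s : ℝ, |t - s| ≤ 1 → |H t - H s| ≤ Cf * Cg * (2 * Real.pi) ^ 2 := by
    intro t s hts
    have i1 : IntervalIntegrable (fun x => f x * g (t - x)) MeasureTheory.volume 0 (2 * Real.pi) :=
      (hcf.mul (hcg.comp (continuous_const.sub continuous_id))).intervalIntegrable _ _
    have i2 : IntervalIntegrable (fun x => f x * g (s - x)) MeasureTheory.volume 0 (2 * Real.pi) :=
      (hcf.mul (hcg.comp (continuous_const.sub continuous_id))).intervalIntegrable _ _
    have i3 : IntervalIntegrable (fun x => g (t - x)) MeasureTheory.volume 0 (2 * Real.pi) :=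
      (hcg.comp (continuous_const.sub continuous_id)).intervalIntegrable _ _
    have i4 : IntervalIntegrable (fun x => g (s - x)) MeasureTheory.volume 0 (2 * Real.pi) :=
      (hcg.comp (continuous_const.sub continuous_id)).intervalIntegrable _ _
    have key : H t - H s =
        ∫ x in (0:ℝ)..(2 * Real.pi), (f x - f 0) * (g (t - x) - g (s - x)) := by
      have expand : (fun x => (f x - f 0) * (g (t - x) - g (s - x))) =
          fun x => (f x * g (t - x) - f x * g (s - x)) - (f 0 * g (t - x) - f 0 * g (s - x)) := by
        funext x; ring
      rw [expand, intervalIntegral.integral_sub ((i1.sub i2))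
        ((i3.const_mul (f 0)).sub (i4.const_mul (f 0))),
        intervalIntegral.integral_sub i1 i2,
        intervalIntegral.integral_sub (i3.const_mul (f 0)) (i4.const_mul (f 0)),
        intervalIntegral.integral_const_mul, intervalIntegral.integral_const_mul,
        hgconst t, hgconst s]
      simp [hH]
    rw [key]
    have hbound : |∫ x in (0:ℝ)..(2 * Real.pi), (f x - f 0) * (g (t - x) - g (s - x))| ≤
        ((Cf * (2 * Real.pi) ^ α) * (Cg * |t - s| ^ β)) * |2 * Real.pi - 0| := by
      rw [← Real.norm_eq_abs]
      apply intervalIntegral.norm_integral_le_of_norm_le_const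
      intro x hx
      rw [Set.uIoc_of_le (by positivity)] at hx
      obtain ⟨hx0, hx2⟩ := hx
      rw [Real.norm_eq_abs, abs_mul]
      have h1 : |f x - f 0| ≤ Cf * (2 * Real.pi) ^ α := by
        refine (hf x 0).trans ?_
        have : |x - 0| ^ α ≤ (2 * Real.pi) ^ α := by
          apply Real.rpow_le_rpow (abs_nonneg _) _ hα0.le
          rw [sub_zero, abs_of_pos hx0]; exact hx2
        exact mul_le_mul_of_nonneg_left this hCf
      have h2 : |g (t - x) - g (s - x)| ≤ Cg * |t - s| ^ β := by
        have := hg (t - x) (s - x)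
        rwa [show t - x - (s - x) = t - s by ring] at this
      exact mul_le_mul h1 h2 (abs_nonneg _) (by positivity)
    refine hbound.trans ?_
    have e1 : (2 * Real.pi) ^ α ≤ 2 * Real.pi := by
      calc (2 * Real.pi) ^ α ≤ (2 * Real.pi) ^ (1:ℝ) :=
            Real.rpow_le_rpow_of_exponent_le hπ1 hα1.le
        _ = 2 * Real.pi := Real.rpow_one _
    have e2 : |t - s| ^ β ≤ 1 := Real.rpow_le_one (abs_nonneg _) hts hβ0.le
    have e3 : |2 * Real.pi - 0| = 2 * Real.pi := by
      rw [sub_zero, abs_of_pos (by positivity)]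
    rw [e3]
    calc (Cf * (2 * Real.pi) ^ α) * (Cg * |t - s| ^ β) * (2 * Real.pi)
        ≤ (Cf * (2 * Real.pi)) * (Cg * 1) * (2 * Real.pi) := by
          gcongr
        _ = Cf * Cg * (2 * Real.pi) ^ 2 := by ring
  -- second difference bound
  have hsecond : ∀ s δ : ℝ, 0 < δ →
      |H (s + 2 * δ) - 2 * H (s + δ) + H s| ≤ 2 * Real.pi * (Cf * Cg) * δ := by
    intro s δ hδ
    have d1 := conv_diff hcf hcg hpf hpg (s + δ) δ
    have d2 := conv_diff hcf hcg hpf hpg s δ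
    have i1 : IntervalIntegrable (fun x => (f (x + δ) - f x) * g (s + δ - x))
        MeasureTheory.volume 0 (2 * Real.pi) :=
      (((hcf.comp (continuous_id.add continuous_const)).sub hcf).mul
        (hcg.comp (continuous_const.sub continuous_id))).intervalIntegrable _ _
    have i2 : IntervalIntegrable (fun x => (f (x + δ) - f x) * g (s - x))
        MeasureTheory.volume 0 (2 * Real.pi) :=
      (((hcf.comp (continuous_id.add continuous_const)).sub hcf).mul
        (hcg.comp (continuous_const.sub continuous_id))).intervalIntegrable _ _
    have key : H (s + 2 * δ) - 2 * H (s + δ) + H s =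
        ∫ x in (0:ℝ)..(2 * Real.pi), (f (x + δ) - f x) * (g (s + δ - x) - g (s - x)) := by
      have e : s + 2 * δ = s + δ + δ := by ring
      have split : H (s + 2 * δ) - 2 * H (s + δ) + H s =
          (H (s + δ + δ) - H (s + δ)) - (H (s + δ) - H s) := by rw [e]; ring
      rw [split, hH]
      simp only
      rw [d1, d2, ← intervalIntegral.integral_sub i1 i2]
      congr 1; funext x; ring
    rw [key]
    have hbound : |∫ x in (0:ℝ)..(2 * Real.pi),
        (f (x + δ) - f x) * (g (s + δ - x) - g (s - x))| ≤
        ((Cf * δ ^ α) * (Cg * δ ^ β)) * |2 * Real.pi - 0| := by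
      rw [← Real.norm_eq_abs]
      apply intervalIntegral.norm_integral_le_of_norm_le_const
      intro x _
      rw [Real.norm_eq_abs, abs_mul]
      have h1 : |f (x + δ) - f x| ≤ Cf * δ ^ α := by
        have := hf (x + δ) x
        rwa [show x + δ - x = δ by ring, abs_of_pos hδ] at this
      have h2 : |g (s + δ - x) - g (s - x)| ≤ Cg * δ ^ β := by
        have := hg (s + δ - x) (s - x)
        rwa [show s + δ - x - (s - x) = δ by ring, abs_of_pos hδ] at this
      exact mul_le_mul h1 h2 (abs_nonneg _) (by positivity)
    refine hbound.trans (le_of_eq ?_)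
    rw [sub_zero, abs_of_pos (by positivity : (0:ℝ) < 2 * Real.pi)]
    rw [show (Cf * δ ^ α) * (Cg * δ ^ β) = Cf * Cg * (δ ^ α * δ ^ β) by ring,
      ← Real.rpow_add hδ, hαβ, Real.rpow_one]
    ring
  -- the dyadic induction
  have hind : ∀ n : ℕ, ∀ δ : ℝ, 0 < δ → 2 ^ n * δ ≤ 1 → ∀ s : ℝ,
      |H (s + δ) - H s| ≤ Cf * Cg * (2 * Real.pi) ^ 2 / 2 ^ n +
        n * (Real.pi * (Cf * Cg)) * δ := by
    intro n
    induction n with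
    | zero =>
      intro δ hδ hδ1 s
      have : |s + δ - s| ≤ 1 := by
        rw [show s + δ - s = δ by ring, abs_of_pos hδ]
        simpa using hδ1
      simpa using hcrude (s + δ) s this
    | succ n ih =>
      intro δ hδ hδ1 s
      have h2δ : (0:ℝ) < 2 * δ := by linarith
      have h2δ1 : 2 ^ n * (2 * δ) ≤ 1 := by
        calc (2:ℝ) ^ n * (2 * δ) = 2 ^ (n + 1) * δ := by ring
          _ ≤ 1 := hδ1
      have hA := ih (2 * δ) h2δ h2δ1 s
      have hB := hsecond s δ hδ
      have key : H (s + δ) - H s =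
          (H (s + 2 * δ) - H s) / 2 - (H (s + 2 * δ) - 2 * H (s + δ) + H s) / 2 := by ring
      have habs : |H (s + δ) - H s| ≤
          |H (s + 2 * δ) - H s| / 2 + |H (s + 2 * δ) - 2 * H (s + δ) + H s| / 2 := by
        rw [key]
        refine (abs_sub _ _).trans ?_
        rw [abs_div, abs_div]
        norm_num
      refine habs.trans ?_
      have hp2 : (0:ℝ) < 2 ^ n := by positivity
      calc |H (s + 2 * δ) - H s| / 2 + |H (s + 2 * δ) - 2 * H (s + δ) + H s| / 2
          ≤ (Cf * Cg * (2 * Real.pi) ^ 2 / 2 ^ n + n * (Real.pi * (Cf * Cg)) * (2 * δ)) / 2 +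
            (2 * Real.pi * (Cf * Cg) * δ) / 2 := by
            gcongr
        _ = Cf * Cg * (2 * Real.pi) ^ 2 / 2 ^ (n + 1) +
            (n + 1 : ℕ) * (Real.pi * (Cf * Cg)) * δ := by
            push_cast
            rw [pow_succ]
            field_simp
            ring
  -- main estimate for ordered points
  have hmain : ∀ t s : ℝ, s < t → t - s ≤ 1 / 2 →
      |H t - H s| ≤ (2 * (2 * Real.pi) ^ 2 + Real.pi) / Real.log 2 * Cf * Cg *
        |t - s| * |Real.log (|t - s|)| := by
    intro t s hst hhalf
    set δ := t - s with hδdef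
    have hδ : 0 < δ := by simp [hδdef]; linarith
    have habsδ : |t - s| = δ := abs_of_pos hδ
    have hδ1 : δ < 1 := by linarith
    have hinv2 : (2:ℝ) ≤ δ⁻¹ := by
      rw [inv_eq_one_div, le_div_iff₀ hδ]; linarith
    have hloginv : Real.log δ⁻¹ = |Real.log δ| := by
      rw [Real.log_inv, abs_of_neg (Real.log_neg hδ hδ1)]
    have hL2 : Real.log 2 ≤ |Real.log δ| := by
      rw [← hloginv]
      exact Real.log_le_log (by norm_num) hinv2
    set n := ⌊Real.logb 2 δ⁻¹⌋₊ with hn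
    have hlogbnn : 0 ≤ Real.logb 2 δ⁻¹ := Real.logb_nonneg one_lt_two (by linarith)
    have hnle : (n:ℝ) ≤ Real.logb 2 δ⁻¹ := Nat.floor_le hlogbnn
    have h2n : (2:ℝ) ^ n ≤ δ⁻¹ := by
      have h := Real.rpow_le_rpow_of_exponent_le one_le_two hnle
      rwa [Real.rpow_natCast, Real.rpow_logb (by norm_num) (by norm_num) (inv_pos.2 hδ)] at h
    have h2nδ : (2:ℝ) ^ n * δ ≤ 1 := by
      calc (2:ℝ) ^ n * δ ≤ δ⁻¹ * δ := by gcongr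
        _ = 1 := inv_mul_cancel₀ hδ.ne'
    have hup : δ⁻¹ ≤ 2 ^ (n + 1) := by
      have h1 : Real.logb 2 δ⁻¹ < (n:ℝ) + 1 := Nat.lt_floor_add_one _
      have h := Real.rpow_lt_rpow_of_exponent_lt one_lt_two h1
      rw [Real.rpow_logb (by norm_num) (by norm_num) (inv_pos.2 hδ)] at h
      refine h.le.trans (le_of_eq ?_)
      rw [show ((n:ℝ) + 1) = ((n + 1 : ℕ) : ℝ) by push_cast; ring, Real.rpow_natCast]
    have hhalfn : (1:ℝ) / 2 ^ n ≤ 2 * δ := by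
      rw [div_le_iff₀ (by positivity)]
      have h1 : (1:ℝ) ≤ 2 ^ (n + 1) * δ := by
        calc (1:ℝ) = δ⁻¹ * δ := (inv_mul_cancel₀ hδ.ne').symm
          _ ≤ 2 ^ (n + 1) * δ := by gcongr
      calc (1:ℝ) ≤ 2 ^ (n + 1) * δ := h1
        _ = 2 * δ * 2 ^ n := by ring
    have hnlog : (n:ℝ) ≤ |Real.log δ| / Real.log 2 := by
      refine hnle.trans (le_of_eq ?_)
      rw [Real.logb, hloginv]
    have hKge1 : 1 ≤ |Real.log δ| / Real.log 2 := (one_le_div hlog2).2 hL2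
    have happ := hind n δ hδ h2nδ s
    rw [show s + δ = t by rw [hδdef]; ring] at happ
    set M := Cf * Cg * (2 * Real.pi) ^ 2 with hM
    have hM0 : 0 ≤ M := by positivity
    set K := |Real.log δ| / Real.log 2 with hK
    have hK0 : 0 ≤ K := by positivity
    have step1 : M / 2 ^ n ≤ M * (2 * δ) := by
      rw [show M / 2 ^ n = M * (1 / 2 ^ n) by ring]
      exact mul_le_mul_of_nonneg_left hhalfn hM0
    have step2 : (n:ℝ) * (Real.pi * (Cf * Cg)) * δ ≤ K * (Real.pi * (Cf * Cg)) * δ := by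
      have hq : (0:ℝ) ≤ Real.pi * (Cf * Cg) := by positivity
      exact mul_le_mul_of_nonneg_right (mul_le_mul_of_nonneg_right hnlog hq) hδ.le
    have step3 : M * (2 * δ) ≤ 2 * M * δ * K := by
      calc M * (2 * δ) = M * (2 * δ) * 1 := by ring
        _ ≤ M * (2 * δ) * K := mul_le_mul_of_nonneg_left hKge1 (by positivity)
        _ = 2 * M * δ * K := by ring
    have final : |H t - H s| ≤ 2 * M * δ * K + K * (Real.pi * (Cf * Cg)) * δ := by
      calc |H t - H s| ≤ M / 2 ^ n + ↑n * (Real.pi * (Cf * Cg)) * δ := happ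
        _ ≤ M * (2 * δ) + K * (Real.pi * (Cf * Cg)) * δ := add_le_add step1 step2
        _ ≤ 2 * M * δ * K + K * (Real.pi * (Cf * Cg)) * δ := add_le_add_left step3 _
    rw [habsδ]
    have heq : (2 * (2 * Real.pi) ^ 2 + Real.pi) / Real.log 2 * Cf * Cg * δ * |Real.log δ|
        = 2 * M * δ * K + K * (Real.pi * (Cf * Cg)) * δ := by
      rw [hM, hK]
      field_simp
    rw [heq]
    exact final
  intro t s hts hhalf
  rcases lt_or_gt_of_ne (fun h : t = s => by simp [h] at hts) with h | h
  · have := hmain s t h (by rw [abs_sub_comm] at hhalf; rwa [abs_of_pos (by linarith)] at hhalf)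
    rw [abs_sub_comm (H s) (H t), abs_sub_comm s t] at this
    exact this
  · exact hmain t s h (by rwa [abs_of_pos (by linarith)] at hhalf)
end

section
/- Let α ∈ (0,1). There is an absolute constant C such that for every continuous 2π-periodic function f : ℝ → ℝ which is α-Hölder with constant C_f, and every integer k ≥ 0, the Fourier coefficients of f satisfy the dyadic block estimate ∑_{n ∈ ℤ, 2^k ≤ |n| ≤ 2^{k+1}} |f̂(n)|² ≤ C · C_f² · 2^(−2kα). -/
set_option maxHeartbeats 1000000

open MeasureTheory Complex Set intervalIntegral Finset AddCircle
open scoped ENNReal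

/-- Dyadic block estimate for the Fourier coefficients of an `α`-Hölder
`2π`-periodic function:
`∑_{2^k ≤ |n| ≤ 2^{k+1}} |f̂(n)|² ≤ C · C_f² · 2^(−2kα)`. -/
theorem stmt_3 (α : ℝ) (hα : α ∈ Set.Ioo (0:ℝ) 1) :
    ∃ C : ℝ, 0 < C ∧
      ∀ (f : ℝ → ℝ) (Cf : ℝ), 0 ≤ Cf → Continuous f →
        (∀ x, f (x + 2 * Real.pi) = f x) →
        (∀ x y, |f x - f y| ≤ Cf * |x - y| ^ α) →
        ∀ k : ℕ,
          ∑ n ∈ (Finset.Icc (-(2 ^ (k + 1) : ℤ)) (2 ^ (k + 1))).filter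
              (fun n => (2 : ℤ) ^ k ≤ |n|),
            ‖(1 / (2 * (Real.pi : ℂ))) *
                ∫ x in (0:ℝ)..(2 * Real.pi),
                  (f x : ℂ) * Complex.exp (-(Complex.I * (n : ℂ) * (x : ℂ)))‖ ^ 2
            ≤ C * Cf ^ 2 * (2 : ℝ) ^ (-(2 * (k : ℝ) * α)) := by
  obtain ⟨hα0, hα1⟩ := hα
  have hπ : (0:ℝ) < 2 * Real.pi := by positivity
  haveI : Fact (0 < 2 * Real.pi) := ⟨hπ⟩
  have hπc : (Real.pi : ℂ) ≠ 0 := Complex.ofReal_ne_zero.mpr Real.pi_ne_zero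
  refine ⟨Real.pi ^ 2, by positivity, ?_⟩
  intro f Cf hCf hfc hper hHol k
  set h : ℝ := Real.pi / 2 ^ (k + 1) with hh
  have hhpos : 0 < h := by positivity
  set fc : ℝ → ℂ := fun x => (f x : ℂ) with hfc'
  set g : ℝ → ℂ := fun x => fc (x + h) - fc x with hg
  set c : ℤ → ℂ := fun n => (1 / (2 * (Real.pi : ℂ))) *
      ∫ x in (0:ℝ)..(2 * Real.pi),
        fc x * Complex.exp (-(Complex.I * (n : ℂ) * (x : ℂ))) with hc
  set G : AddCircle (2 * Real.pi) → ℂ := AddCircle.liftIco (2 * Real.pi) 0 g with hG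
  have hfcc : Continuous fc := by fun_prop
  have hgc : Continuous g := by fun_prop
  have hGc : Continuous G := by
    apply AddCircle.liftIco_continuous
    · simp only [hg, zero_add, hfc']
      have h1 : f (2 * Real.pi + h) = f h := by
        rw [show 2 * Real.pi + h = h + 2 * Real.pi by ring, hper]
      have h2 : f (2 * Real.pi) = f 0 := by
        rw [show (2 * Real.pi : ℝ) = 0 + 2 * Real.pi by ring, hper]
      rw [h1, h2]
    · exact hgc.continuousOn
  -- Step A
  have key : ∀ (n : ℤ) (x : ℝ), (fourier (-n) (x : AddCircle (2 * Real.pi)) : ℂ)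
      = Complex.exp (-(Complex.I * n * x)) := by
    intro n x
    rw [fourier_coe_apply]
    congr 1
    push_cast
    field_simp
  have per : ∀ n : ℤ, Function.Periodic
      (fun y : ℝ => Complex.exp (-(Complex.I * n * y)) * fc y) (2 * Real.pi) := by
    intro n y
    simp only [hfc', hper]
    congr 1
    rw [show -(Complex.I * n * ((y : ℝ) + 2 * Real.pi : ℝ))
        = -(Complex.I * n * y) + (-n : ℤ) * (2 * Real.pi * Complex.I) by push_cast; ring,
      Complex.exp_add, Complex.exp_int_mul_two_pi_mul_I, mul_one]
  have hcn : ∀ n : ℤ, c n = (1 / (2 * (Real.pi : ℂ))) *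
      ∫ x in (0:ℝ)..(2 * Real.pi), Complex.exp (-(Complex.I * n * x)) * fc x := by
    intro n
    simp only [hc]
    congr 1
    apply intervalIntegral.integral_congr
    intro x _
    ring
  have stepA : ∀ n : ℤ, fourierCoeff G n = (Complex.exp (Complex.I * n * h) - 1) * c n := by
    intro n
    rw [hG, fourierCoeff_liftIco_eq g n, fourierCoeffOn_eq_integral]
    have hint : ∀ b : ℝ, IntervalIntegrable
        (fun x => Complex.exp (-(Complex.I * n * x)) * fc (x + b)) volume 0 (2 * Real.pi) := by
      intro b
      apply Continuous.intervalIntegrable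
      fun_prop
    have split : (∫ x in (0:ℝ)..(0 + 2 * Real.pi),
          (fourier (-n) (x : AddCircle (0 + 2 * Real.pi - 0)) : ℂ) • g x)
        = (∫ x in (0:ℝ)..(2 * Real.pi), Complex.exp (-(Complex.I * n * x)) * fc (x + h))
          - ∫ x in (0:ℝ)..(2 * Real.pi), Complex.exp (-(Complex.I * n * x)) * fc x := by
      rw [← intervalIntegral.integral_sub (hint h) (by simpa using hint 0)]
      rw [show (0:ℝ) + 2 * Real.pi - 0 = 2 * Real.pi by ring, zero_add]
      apply intervalIntegral.integral_congr
      intro x _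
      simp only [smul_eq_mul, key, hg]
      ring
    have shift : (∫ x in (0:ℝ)..(2 * Real.pi), Complex.exp (-(Complex.I * n * x)) * fc (x + h))
        = Complex.exp (Complex.I * n * h)
          * ∫ x in (0:ℝ)..(2 * Real.pi), Complex.exp (-(Complex.I * n * x)) * fc x := by
      have e : ∀ x ∈ Set.uIcc (0:ℝ) (2 * Real.pi),
          Complex.exp (-(Complex.I * n * x)) * fc (x + h)
          = Complex.exp (Complex.I * n * h)
            * ((fun y : ℝ => Complex.exp (-(Complex.I * n * y)) * fc y) (x + h)) := by
        intro x _
        simp only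
        rw [← mul_assoc, ← Complex.exp_add]
        congr 2
        push_cast
        ring
      rw [intervalIntegral.integral_congr e, intervalIntegral.integral_const_mul]
      congr 1
      rw [intervalIntegral.integral_comp_add_right
        (fun y => Complex.exp (-(Complex.I * n * y)) * fc y) h]
      have := (per n).intervalIntegral_add_eq h 0
      rw [zero_add] at this
      rw [zero_add, show 2 * Real.pi + h = h + 2 * Real.pi by ring]
      exact this
    rw [split, shift, hcn n]
    rw [show (0:ℝ) + 2 * Real.pi - 0 = 2 * Real.pi by ring]
    rw [Complex.real_smul]
    push_cast
    ring
  -- pointwise bound on g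
  have hgb : ∀ x : ℝ, ‖g x‖ ≤ Cf * h ^ α := by
    intro x
    have e : ‖g x‖ = |f (x + h) - f x| := by
      simp only [hg, hfc']
      rw [← Complex.ofReal_sub, Complex.norm_real, Real.norm_eq_abs]
    rw [e]
    have := hHol (x + h) x
    simpa [abs_of_pos hhpos] using this
  -- Lp version
  set Glp : Lp ℂ 2 (@haarAddCircle (2 * Real.pi) _) :=
    ContinuousMap.toLp 2 haarAddCircle ℂ ⟨G, hGc⟩ with hGL
  have hcoeff : ∀ n : ℤ, fourierCoeff (Glp : AddCircle (2 * Real.pi) → ℂ) n = fourierCoeff G n :=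
    fun n => fourierCoeff_toLp ⟨G, hGc⟩ n
  have summ : Summable (fun n : ℤ => ‖fourierCoeff G n‖ ^ 2) := by
    have hs := lp.memℓp (fourierBasis.repr Glp)
    rw [memℓp_gen_iff (p := 2) (by norm_num)] at hs
    simp only [fourierBasis_repr, hcoeff] at hs
    have e2 : ((2:ℝ≥0∞).toReal) = ((2:ℕ):ℝ) := by norm_num
    simp only [e2, Real.rpow_natCast] at hs
    exact hs
  have parseval : ∑' n : ℤ, ‖fourierCoeff G n‖ ^ 2 ≤ (Cf * h ^ α) ^ 2 := by
    have P := tsum_sq_fourierCoeff Glp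
    simp only [hcoeff] at P
    rw [P]
    have hae : (Glp : AddCircle (2 * Real.pi) → ℂ) =ᵐ[haarAddCircle] G :=
      ContinuousMap.coeFn_toLp (p := 2) (μ := haarAddCircle) (𝕜 := ℂ) ⟨G, hGc⟩
    have e : ∫ t, ‖(Glp : AddCircle (2 * Real.pi) → ℂ) t‖ ^ 2 ∂haarAddCircle
        = ∫ t, ‖G t‖ ^ 2 ∂haarAddCircle := by
      apply MeasureTheory.integral_congr_ae
      filter_upwards [hae] with t ht
      rw [ht]
    rw [e]
    have hb : ∀ t : AddCircle (2 * Real.pi), ‖G t‖ ^ 2 ≤ (Cf * h ^ α) ^ 2 := by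
      intro t
      have h1 : ‖G t‖ ≤ Cf * h ^ α := hgb _
      nlinarith [norm_nonneg (G t)]
    have hnb := MeasureTheory.norm_integral_le_of_norm_le_const (μ := (@haarAddCircle (2 * Real.pi) _))
      (f := fun t : AddCircle (2 * Real.pi) => ‖G t‖ ^ 2) (C := (Cf * h ^ α) ^ 2)
      (Filter.Eventually.of_forall fun t => by
        simp only [Real.norm_eq_abs]
        rw [_root_.abs_of_nonneg (by positivity : (0:ℝ) ≤ ‖G t‖ ^ 2)]
        exact hb t)
    simp only [measureReal_def, measure_univ, ENNReal.toReal_one, mul_one] at hnb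
    exact le_trans (le_abs_self _) hnb
  -- block bound
  have block : ∀ n ∈ (Finset.Icc (-(2 ^ (k + 1) : ℤ)) (2 ^ (k + 1))).filter
      (fun n => (2 : ℤ) ^ k ≤ |n|),
      ‖c n‖ ^ 2 ≤ (1/2) * ‖fourierCoeff G n‖ ^ 2 := by
    intro n hn
    rw [Finset.mem_filter, Finset.mem_Icc] at hn
    obtain ⟨⟨hn1, hn2⟩, hn3⟩ := hn
    have habs : |(n:ℝ)| ≤ 2 ^ (k+1) := by
      have h' : |n| ≤ 2 ^ (k+1) := abs_le.mpr ⟨hn1, hn2⟩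
      calc |(n:ℝ)| = ((|n| : ℤ) : ℝ) := by push_cast; rfl
        _ ≤ ((2 ^ (k+1) : ℤ) : ℝ) := by exact_mod_cast h'
        _ = 2 ^ (k+1) := by push_cast; rfl
    have habs' : (2:ℝ) ^ k ≤ |(n:ℝ)| := by
      calc (2:ℝ) ^ k = ((2 ^ k : ℤ) : ℝ) := by push_cast; rfl
        _ ≤ ((|n| : ℤ) : ℝ) := by exact_mod_cast hn3
        _ = |(n:ℝ)| := by push_cast; rfl
    set θ : ℝ := (n : ℝ) * h with hθ
    have hexp : Complex.exp (Complex.I * n * h) = Complex.exp (θ * Complex.I) := by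
      congr 1
      rw [hθ]
      push_cast
      ring
    have h2k : (2:ℝ) ^ (k+1) = 2 ^ k * 2 := pow_succ 2 k
    have h1 : Real.pi / 2 ≤ |(n:ℝ)| * h := by
      have e1 : (2:ℝ) ^ k * h = Real.pi / 2 := by
        rw [hh, h2k]; field_simp
      calc Real.pi / 2 = (2:ℝ) ^ k * h := e1.symm
        _ ≤ |(n:ℝ)| * h := by gcongr
    have h2 : |(n:ℝ)| * h ≤ Real.pi := by
      have e2 : (2:ℝ) ^ (k+1) * h = Real.pi := by
        rw [hh]; field_simp
      calc |(n:ℝ)| * h ≤ (2:ℝ) ^ (k+1) * h := by gcongr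
        _ = Real.pi := e2
    have hcosθ : Real.cos θ ≤ 0 := by
      rw [← Real.cos_abs]
      have habsθ : |θ| = |(n:ℝ)| * h := by
        rw [hθ, abs_mul, abs_of_pos hhpos]
      apply Real.cos_nonpos_of_pi_div_two_le_of_le
      · rw [habsθ]; exact h1
      · rw [habsθ]; linarith [Real.pi_pos]
    have hesq : (2:ℝ) ≤ ‖Complex.exp (Complex.I * n * h) - 1‖ ^ 2 := by
      rw [hexp]
      have e3 : ‖Complex.exp (θ * Complex.I) - 1‖ ^ 2 = 2 - 2 * Real.cos θ := by
        rw [Complex.sq_norm, Complex.normSq_apply]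
        simp [Complex.exp_mul_I, Complex.cos_ofReal_re, Complex.sin_ofReal_re]
        nlinarith [Real.sin_sq_add_cos_sq θ]
      rw [e3]; linarith
    rw [stepA n, norm_mul (Complex.exp (Complex.I * n * h) - 1) (c n), mul_pow]
    nlinarith [norm_nonneg (c n), sq_nonneg ‖c n‖,
      mul_le_mul_of_nonneg_right hesq (sq_nonneg ‖c n‖)]
  -- final computation
  calc ∑ n ∈ (Finset.Icc (-(2 ^ (k + 1) : ℤ)) (2 ^ (k + 1))).filter
          (fun n => (2 : ℤ) ^ k ≤ |n|), ‖c n‖ ^ 2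
      ≤ ∑ n ∈ (Finset.Icc (-(2 ^ (k + 1) : ℤ)) (2 ^ (k + 1))).filter
          (fun n => (2 : ℤ) ^ k ≤ |n|), (1/2) * ‖fourierCoeff G n‖ ^ 2 :=
        Finset.sum_le_sum block
    _ = (1/2) * ∑ n ∈ (Finset.Icc (-(2 ^ (k + 1) : ℤ)) (2 ^ (k + 1))).filter
          (fun n => (2 : ℤ) ^ k ≤ |n|), ‖fourierCoeff G n‖ ^ 2 := by
        rw [Finset.mul_sum]
    _ ≤ (1/2) * ∑' n : ℤ, ‖fourierCoeff G n‖ ^ 2 := by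
        gcongr
        exact summ.sum_le_tsum _ (fun n _ => by positivity)
    _ ≤ (1/2) * (Cf * h ^ α) ^ 2 := by gcongr
    _ ≤ Real.pi ^ 2 * Cf ^ 2 * (2 : ℝ) ^ (-(2 * (k : ℝ) * α)) := by
        have hπ1 : (1:ℝ) ≤ Real.pi := by linarith [Real.pi_gt_three]
        have A : (h ^ α) ^ 2 ≤ Real.pi ^ 2 * (2:ℝ) ^ (-(2 * (k:ℝ) * α)) := by
          have e1 : h ^ α = Real.pi ^ α / ((2:ℝ) ^ (k+1 : ℕ)) ^ α := by
            rw [hh]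
            exact Real.div_rpow Real.pi_pos.le (by positivity) α
          have hnum : (Real.pi ^ α) ^ 2 ≤ Real.pi ^ 2 := by
            have hle : Real.pi ^ α ≤ Real.pi := by
              nth_rewrite 2 [← Real.rpow_one Real.pi]
              exact Real.rpow_le_rpow_of_exponent_le hπ1 hα1.le
            have h0 : (0:ℝ) ≤ Real.pi ^ α := Real.rpow_nonneg Real.pi_pos.le α
            nlinarith
          have hden : (2:ℝ) ^ (2 * (k:ℝ) * α) ≤ (((2:ℝ) ^ (k+1 : ℕ)) ^ α) ^ 2 := by
            have e : (((2:ℝ) ^ (k+1 : ℕ)) ^ α) ^ 2 = (2:ℝ) ^ (((k:ℝ)+1) * α * 2) := by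
              rw [← Real.rpow_natCast (((2:ℝ) ^ (k+1 : ℕ)) ^ α) 2,
                ← Real.rpow_natCast (2:ℝ) (k+1),
                ← Real.rpow_mul (by norm_num : (0:ℝ) ≤ 2),
                ← Real.rpow_mul (by norm_num : (0:ℝ) ≤ 2)]
              congr 1
              push_cast
              ring
            rw [e]
            apply Real.rpow_le_rpow_of_exponent_le one_le_two
            nlinarith [hα0.le, Nat.cast_nonneg (α := ℝ) k]
          calc (h ^ α) ^ 2 = (Real.pi ^ α) ^ 2 / (((2:ℝ) ^ (k+1 : ℕ)) ^ α) ^ 2 := by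
                rw [e1, div_pow]
            _ ≤ Real.pi ^ 2 / (2:ℝ) ^ (2 * (k:ℝ) * α) := by
                apply div_le_div₀ (by positivity) hnum (by positivity) hden
            _ = Real.pi ^ 2 * (2:ℝ) ^ (-(2 * (k:ℝ) * α)) := by
                rw [Real.rpow_neg (by norm_num), div_eq_mul_inv]
        nlinarith [mul_le_mul_of_nonneg_left A (sq_nonneg Cf), sq_nonneg (Cf * h ^ α),
          sq_nonneg Cf, Real.rpow_nonneg (le_of_lt hhpos) α]
end

section
/- Let α, β ∈ (0,1). There is an absolute constant C such that for all continuous 2π-periodic functions f, g : ℝ → ℝ, if f is α-Hölder with constant C_f and g is β-Hölder with constant C_g, and h is their circle convolution, then for every integer k ≥ 0: ∑_{n ∈ ℤ, 2^k ≤ |n| ≤ 2^{k+1}} |ĥ(n)| ≤ C · C_f · C_g · 2^(−k(α+β)). -/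
open MeasureTheory Complex Set Function intervalIntegral Real AddCircle

noncomputable def cc (u : ℝ → ℂ) (n : ℤ) : ℂ :=
  (1 / (2 * (Real.pi : ℂ))) *
    ∫ t in (0:ℝ)..(2 * Real.pi), u t * Complex.exp (-(Complex.I * (n : ℂ) * (t : ℂ)))

instance : Fact ((0:ℝ) < 2 * Real.pi) := ⟨Real.two_pi_pos⟩

lemma fourier_neg_eq (n : ℤ) (x : ℝ) :
    (fourier (-n) (x : AddCircle (2 * Real.pi)) : ℂ)
      = Complex.exp (-(Complex.I * (n : ℂ) * (x : ℂ))) := by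
  rw [fourier_coe_apply]
  congr 1
  have : (Real.pi : ℂ) ≠ 0 := Complex.ofReal_ne_zero.mpr Real.pi_ne_zero
  push_cast
  field_simp

lemma fourierCoeffOn_eq_cc (u : ℝ → ℂ) (n : ℤ) :
    fourierCoeffOn (by linarith [Real.two_pi_pos] : (0:ℝ) < 0 + 2 * Real.pi) u n = cc u n := by
  rw [fourierCoeffOn_eq_integral]
  rw [cc]
  have h2 : (0:ℝ) + 2 * Real.pi - 0 = 2 * Real.pi := by ring
  rw [h2]
  rw [zero_add]
  rw [Complex.real_smul]
  push_cast
  congr 1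
  apply intervalIntegral.integral_congr
  intro x _
  have := fourier_neg_eq n x
  simp only [smul_eq_mul]
  rw [this]
  ring

lemma bessel_cc (u : ℝ → ℂ) (hu : Continuous u) (hper : ∀ x, u (x + 2 * Real.pi) = u x)
    (M : ℝ) (hM : ∀ x, ‖u x‖ ≤ M) (s : Finset ℤ) :
    ∑ n ∈ s, ‖cc u n‖ ^ 2 ≤ M ^ 2 := by
  have hM0 : 0 ≤ M := le_trans (norm_nonneg _) (hM 0)
  have hend : u 0 = u (0 + 2 * Real.pi) := by simpa using (hper 0).symm
  set U : C(AddCircle (2 * Real.pi), ℂ) :=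
    ⟨AddCircle.liftIco (2 * Real.pi) 0 u, AddCircle.liftIco_continuous hend hu.continuousOn⟩
    with hU
  set F : Lp ℂ 2 (@haarAddCircle (2 * Real.pi) _) := ContinuousMap.toLp 2 haarAddCircle ℂ U
    with hF
  have hcoeff : ∀ n : ℤ, fourierCoeff (F : AddCircle (2 * Real.pi) → ℂ) n = cc u n := by
    intro n
    rw [hF, fourierCoeff_toLp]
    have : fourierCoeff (U : AddCircle (2 * Real.pi) → ℂ) n
        = fourierCoeff (AddCircle.liftIco (2 * Real.pi) 0 u) n := rfl
    rw [this, fourierCoeff_liftIco_eq, fourierCoeffOn_eq_cc]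
  have hUnorm : ‖U‖ ≤ M := by
    apply (ContinuousMap.norm_le U hM0).2
    intro z
    show ‖AddCircle.liftIco (2 * Real.pi) 0 u z‖ ≤ M
    rw [AddCircle.liftIco]
    exact hM _
  have hFnorm : ‖F‖ ≤ M := by
    calc ‖F‖ ≤ ‖(ContinuousMap.toLp 2 haarAddCircle ℂ :
            C(AddCircle (2 * Real.pi), ℂ) →L[ℂ] _)‖ * ‖U‖ :=
          (ContinuousMap.toLp 2 haarAddCircle ℂ).le_opNorm U
      _ ≤ 1 * M := by
          apply mul_le_mul _ hUnorm (norm_nonneg _) zero_le_one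
          refine le_trans (ContinuousMap.toLp_norm_le _) ?_
          simp [measureUnivNNReal]
      _ = M := one_mul M
  have hb := orthonormal_fourier.sum_inner_products_le (𝕜 := ℂ) (s := s) F
  have hrepr : ∀ n : ℤ, (inner ℂ (fourierLp 2 n) F)
      = fourierCoeff (F : AddCircle (2 * Real.pi) → ℂ) n := by
    intro n
    rw [← fourierBasis_repr]
    rw [fourierBasis.repr_apply_apply, coe_fourierBasis]
  calc ∑ n ∈ s, ‖cc u n‖ ^ 2 = ∑ n ∈ s, ‖(inner ℂ (fourierLp 2 n) F)‖ ^ 2 := by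
        refine Finset.sum_congr rfl fun n _ => ?_
        rw [hrepr n, hcoeff n]
    _ ≤ ‖F‖ ^ 2 := hb
    _ ≤ M ^ 2 := by nlinarith [norm_nonneg F]

lemma exp_int_per (n : ℤ) (s : ℝ) :
    Complex.exp (-(Complex.I * (n : ℂ) * ((s + 2 * Real.pi : ℝ) : ℂ)))
      = Complex.exp (-(Complex.I * (n : ℂ) * (s : ℂ))) := by
  push_cast
  rw [show -(Complex.I * (n : ℂ) * ((s : ℂ) + 2 * (Real.pi : ℂ)))
      = -(Complex.I * (n : ℂ) * (s : ℂ)) + (-n : ℤ) * (2 * (Real.pi : ℂ) * Complex.I) by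
        push_cast; ring]
  rw [Complex.exp_add, Complex.exp_int_mul_two_pi_mul_I, mul_one]

lemma cc_shift (u : ℝ → ℂ) (hper : ∀ x, u (x + 2 * Real.pi) = u x) (h : ℝ) (n : ℤ) :
    cc (fun x => u (x + h)) n = Complex.exp (Complex.I * (n : ℂ) * (h : ℂ)) * cc u n := by
  unfold cc
  set G : ℝ → ℂ := fun s => u s * Complex.exp (-(Complex.I * (n : ℂ) * (s : ℂ)))
      * Complex.exp (Complex.I * (n : ℂ) * (h : ℂ)) with hG
  have hGper : Function.Periodic G (2 * Real.pi) := by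
    intro s
    simp only [hG]
    rw [hper s, exp_int_per]
  have step1 : (∫ t in (0:ℝ)..(2 * Real.pi), u (t + h)
        * Complex.exp (-(Complex.I * (n : ℂ) * (t : ℂ))))
      = ∫ t in (0:ℝ)..(2 * Real.pi), G (t + h) := by
    apply intervalIntegral.integral_congr
    intro t _
    simp only [hG]
    symm
    rw [mul_assoc, ← Complex.exp_add]
    congr 1
    push_cast
    ring_nf
  rw [step1, intervalIntegral.integral_comp_add_right G h]
  have step2 : (∫ t in (0:ℝ) + h..(2 * Real.pi) + h, G t)
      = ∫ t in (0:ℝ)..(2 * Real.pi), G t := by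
    have := hGper.intervalIntegral_add_eq (0 + h) 0
    rw [show (0:ℝ) + h + 2 * Real.pi = 2 * Real.pi + h by ring, zero_add, zero_add] at this
    rw [zero_add, ← this]
  rw [step2]
  simp only [hG]
  rw [intervalIntegral.integral_mul_const]
  ring

lemma abs_exp_I_sub_one_sq (θ : ℝ) :
    ‖Complex.exp (Complex.I * (θ : ℂ)) - 1‖ ^ 2 = 2 - 2 * Real.cos θ := by
  rw [mul_comm Complex.I, Complex.sq_norm, Complex.normSq_apply]
  simp only [Complex.sub_re, Complex.sub_im, Complex.exp_ofReal_mul_I_re,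
    Complex.exp_ofReal_mul_I_im, Complex.one_re, Complex.one_im]
  nlinarith [Real.sin_sq_add_cos_sq θ]

lemma cc_sub (u v : ℝ → ℂ) (hu : Continuous u) (hv : Continuous v) (n : ℤ) :
    cc (fun x => u x - v x) n = cc u n - cc v n := by
  unfold cc
  rw [← mul_sub]
  congr 1
  have he : Continuous fun t : ℝ => Complex.exp (-(Complex.I * (n : ℂ) * (t : ℂ))) := by
    fun_prop
  rw [← intervalIntegral.integral_sub (f := fun t => u t * Complex.exp (-(Complex.I * (n : ℂ) * (t : ℂ))))
    (g := fun t => v t * Complex.exp (-(Complex.I * (n : ℂ) * (t : ℂ)))) ((hu.mul he).intervalIntegrable _ _)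
    ((hv.mul he).intervalIntegrable _ _)]
  apply intervalIntegral.integral_congr
  intro t _
  ring

lemma block_bound (u : ℝ → ℂ) (hu : Continuous u) (hper : ∀ x, u (x + 2 * Real.pi) = u x)
    (M : ℝ) (k : ℕ) (hM : ∀ x, ‖u (x + Real.pi / 2 ^ (k + 1)) - u x‖ ≤ M) :
    ∑ n ∈ (Finset.Icc (-(2 ^ (k + 1) : ℤ)) (2 ^ (k + 1))).filter
        (fun n => (2 : ℤ) ^ k ≤ |n|), ‖cc u n‖ ^ 2 ≤ M ^ 2 / 2 := by
  set h : ℝ := Real.pi / 2 ^ (k + 1) with hh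
  set s := (Finset.Icc (-(2 ^ (k + 1) : ℤ)) (2 ^ (k + 1))).filter
      (fun n => (2 : ℤ) ^ k ≤ |n|) with hs
  set w : ℝ → ℂ := fun x => u (x + h) - u x with hw
  have hwc : Continuous w := (hu.comp (by fun_prop)).sub hu
  have hwper : ∀ x, w (x + 2 * Real.pi) = w x := by
    intro x
    simp only [hw]
    rw [show x + 2 * Real.pi + h = x + h + 2 * Real.pi by ring, hper, hper]
  have hbes := bessel_cc w hwc hwper M hM s
  have key : ∀ n ∈ s, 2 * ‖cc u n‖ ^ 2 ≤ ‖cc w n‖ ^ 2 := by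
    intro n hn
    have hccw : cc w n = (Complex.exp (Complex.I * (n : ℂ) * (h : ℂ)) - 1) * cc u n := by
      rw [hw]
      rw [cc_sub (fun x => u (x + h)) u (hu.comp (by fun_prop)) hu]
      rw [cc_shift u hper h n]
      ring
    have hnorm : ‖cc w n‖ ^ 2 = ‖Complex.exp (Complex.I * (n : ℂ) * (h : ℂ)) - 1‖ ^ 2
        * ‖cc u n‖ ^ 2 := by
      rw [hccw, norm_mul]; ring
    -- show ‖exp(I n h) - 1‖² ≥ 2
    have harg : (Complex.I * (n : ℂ) * (h : ℂ)) = Complex.I * (((n : ℝ) * h : ℝ) : ℂ) := by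
      push_cast; ring
    have hcos : Real.cos ((n : ℝ) * h) ≤ 0 := by
      rw [← Real.cos_abs]
      apply Real.cos_nonpos_of_pi_div_two_le_of_le
      · -- π/2 ≤ |n h|
        rw [abs_mul]
        have h1 : (2:ℝ) ^ k ≤ |(n : ℝ)| := by
          have := (Finset.mem_filter.mp hn).2
          calc ((2:ℝ) ^ k) = ((2 ^ k : ℤ) : ℝ) := by push_cast; ring
            _ ≤ ((|n| : ℤ) : ℝ) := by exact_mod_cast this
            _ = |(n : ℝ)| := by push_cast; ring
        have habs : |h| = h := abs_of_pos (by positivity)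
        rw [habs, hh]
        calc Real.pi / 2 = 2 ^ k * (Real.pi / 2 ^ (k + 1)) := by
              rw [pow_succ]; field_simp
          _ ≤ |(n:ℝ)| * (Real.pi / 2 ^ (k + 1)) := by
              apply mul_le_mul_of_nonneg_right h1 (by positivity)
      · -- |n h| ≤ π ≤ π + π/2
        rw [abs_mul]
        have h2 : |(n : ℝ)| ≤ 2 ^ (k + 1) := by
          have hn' := (Finset.mem_filter.mp hn).1
          rw [Finset.mem_Icc] at hn'
          have : |n| ≤ (2 ^ (k+1) : ℤ) := abs_le.mpr hn'
          calc |(n : ℝ)| = ((|n| : ℤ) : ℝ) := by push_cast; ring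
            _ ≤ ((2 ^ (k+1) : ℤ) : ℝ) := by exact_mod_cast this
            _ = 2 ^ (k+1) := by push_cast; ring
        have habs : |h| = h := abs_of_pos (by positivity)
        rw [habs, hh]
        have : |(n:ℝ)| * (Real.pi / 2 ^ (k + 1)) ≤ 2 ^ (k+1) * (Real.pi / 2 ^ (k + 1)) :=
          mul_le_mul_of_nonneg_right h2 (by positivity)
        rw [mul_div_cancel₀] at this
        · linarith [Real.pi_pos]
        · positivity
    have h2le : (2:ℝ) ≤ ‖Complex.exp (Complex.I * (n : ℂ) * (h : ℂ)) - 1‖ ^ 2 := by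
      rw [harg, abs_exp_I_sub_one_sq]
      linarith
    calc 2 * ‖cc u n‖ ^ 2
        ≤ ‖Complex.exp (Complex.I * (n : ℂ) * (h : ℂ)) - 1‖ ^ 2 * ‖cc u n‖ ^ 2 :=
          mul_le_mul_of_nonneg_right h2le (by positivity)
      _ = ‖cc w n‖ ^ 2 := hnorm.symm
  have : 2 * ∑ n ∈ s, ‖cc u n‖ ^ 2 ≤ ∑ n ∈ s, ‖cc w n‖ ^ 2 := by
    rw [Finset.mul_sum]
    exact Finset.sum_le_sum key
  linarith

lemma cc_conv (f g : ℝ → ℝ) (hf : Continuous f) (hg : Continuous g)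
    (hpg : ∀ x, g (x + 2 * Real.pi) = g x) (n : ℤ) :
    cc (fun t => ((∫ x in (0:ℝ)..(2 * Real.pi), f x * g (t - x) : ℝ) : ℂ)) n
      = (2 * (Real.pi : ℂ)) * cc (fun x => (f x : ℂ)) n * cc (fun x => (g x : ℂ)) n := by
  have e : ∀ t : ℝ, Complex.exp (-(Complex.I * (n : ℂ) * (t : ℂ)))
      = Complex.exp (-(Complex.I * (n : ℂ) * (t : ℂ))) := fun _ => rfl
  -- inner t-integral computation (substitution + periodicity)
  have inner_eq : ∀ x : ℝ,
      (∫ t in (0:ℝ)..(2 * Real.pi), ((g (t - x) : ℝ) : ℂ)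
          * Complex.exp (-(Complex.I * (n : ℂ) * (t : ℂ))))
      = Complex.exp (-(Complex.I * (n : ℂ) * (x : ℂ)))
        * ∫ s in (0:ℝ)..(2 * Real.pi), ((g s : ℝ) : ℂ)
            * Complex.exp (-(Complex.I * (n : ℂ) * (s : ℂ))) := by
    intro x
    set K : ℝ → ℂ := fun s => ((g s : ℝ) : ℂ)
        * Complex.exp (-(Complex.I * (n : ℂ) * ((s + x : ℝ) : ℂ))) with hK
    have hKper : Function.Periodic K (2 * Real.pi) := by
      intro s
      simp only [hK]
      rw [hpg s, show s + 2 * Real.pi + x = (s + x) + 2 * Real.pi by ring, exp_int_per]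
    have step1 : (∫ t in (0:ℝ)..(2 * Real.pi), ((g (t - x) : ℝ) : ℂ)
          * Complex.exp (-(Complex.I * (n : ℂ) * (t : ℂ))))
        = ∫ t in (0:ℝ)..(2 * Real.pi), K (t - x) := by
      apply intervalIntegral.integral_congr
      intro t _
      simp only [hK]
      congr 2
      push_cast
      ring
    rw [step1, intervalIntegral.integral_comp_sub_right K x]
    have step2 : (∫ t in (0:ℝ) - x..(2 * Real.pi) - x, K t)
        = ∫ t in (0:ℝ)..(2 * Real.pi), K t := by
      have := hKper.intervalIntegral_add_eq (0 - x) 0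
      rw [show (0:ℝ) - x + 2 * Real.pi = 2 * Real.pi - x by ring, zero_add] at this
      rw [this]
    rw [step2]
    rw [hK]
    rw [← intervalIntegral.integral_const_mul]
    apply intervalIntegral.integral_congr
    intro s _
    push_cast
    rw [show -(Complex.I * (n:ℂ) * ((s:ℂ) + (x:ℂ)))
        = -(Complex.I * (n:ℂ) * (x:ℂ)) + -(Complex.I * (n:ℂ) * (s:ℂ)) by ring]
    rw [Complex.exp_add]
    ring
  -- Fubini
  have swap : (∫ t in (0:ℝ)..(2 * Real.pi),
        (∫ x in (0:ℝ)..(2 * Real.pi), ((f x * g (t - x) : ℝ) : ℂ)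
          * Complex.exp (-(Complex.I * (n : ℂ) * (t : ℂ)))))
      = ∫ x in (0:ℝ)..(2 * Real.pi),
          (∫ t in (0:ℝ)..(2 * Real.pi), ((f x * g (t - x) : ℝ) : ℂ)
            * Complex.exp (-(Complex.I * (n : ℂ) * (t : ℂ)))) := by
    have h2π : (0:ℝ) ≤ 2 * Real.pi := by positivity
    have hFc : Continuous (uncurry fun (t x : ℝ) => ((f x * g (t - x) : ℝ) : ℂ)
        * Complex.exp (-(Complex.I * (n : ℂ) * (t : ℂ)))) := by
      apply Continuous.mul
      · apply Complex.continuous_ofReal.comp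
        exact (hf.comp continuous_snd).mul (hg.comp (continuous_fst.sub continuous_snd))
      · fun_prop
    have hint : Integrable (uncurry fun (t x : ℝ) => ((f x * g (t - x) : ℝ) : ℂ)
        * Complex.exp (-(Complex.I * (n : ℂ) * (t : ℂ))))
        ((volume.restrict (Set.Ioc (0:ℝ) (2 * Real.pi))).prod
          (volume.restrict (Set.Ioc (0:ℝ) (2 * Real.pi)))) := by
      rw [Measure.prod_restrict]
      exact (hFc.continuousOn.integrableOn_compact
          (isCompact_Icc.prod isCompact_Icc)).mono_set
        (Set.prod_mono Set.Ioc_subset_Icc_self Set.Ioc_subset_Icc_self)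
    simp_rw [intervalIntegral.integral_of_le h2π]
    exact MeasureTheory.integral_integral_swap hint
  -- main computation
  unfold cc
  have step0 : (∫ t in (0:ℝ)..(2 * Real.pi),
        ((∫ x in (0:ℝ)..(2 * Real.pi), f x * g (t - x) : ℝ) : ℂ)
          * Complex.exp (-(Complex.I * (n : ℂ) * (t : ℂ))))
      = ∫ t in (0:ℝ)..(2 * Real.pi),
          (∫ x in (0:ℝ)..(2 * Real.pi), ((f x * g (t - x) : ℝ) : ℂ)
            * Complex.exp (-(Complex.I * (n : ℂ) * (t : ℂ)))) := by
    apply intervalIntegral.integral_congr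
    intro t _
    beta_reduce
    rw [intervalIntegral.integral_mul_const, intervalIntegral.integral_ofReal]
  rw [step0, swap]
  have step3 : (∫ x in (0:ℝ)..(2 * Real.pi),
        (∫ t in (0:ℝ)..(2 * Real.pi), ((f x * g (t - x) : ℝ) : ℂ)
          * Complex.exp (-(Complex.I * (n : ℂ) * (t : ℂ)))))
      = (∫ x in (0:ℝ)..(2 * Real.pi), ((f x : ℝ) : ℂ)
            * Complex.exp (-(Complex.I * (n : ℂ) * (x : ℂ))))
        * ∫ s in (0:ℝ)..(2 * Real.pi), ((g s : ℝ) : ℂ)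
            * Complex.exp (-(Complex.I * (n : ℂ) * (s : ℂ))) := by
    rw [← intervalIntegral.integral_mul_const]
    apply intervalIntegral.integral_congr
    intro x _
    beta_reduce
    have : (fun t : ℝ => ((f x * g (t - x) : ℝ) : ℂ)
          * Complex.exp (-(Complex.I * (n : ℂ) * (t : ℂ))))
        = fun t : ℝ => ((f x : ℝ) : ℂ) * (((g (t - x) : ℝ) : ℂ)
          * Complex.exp (-(Complex.I * (n : ℂ) * (t : ℂ)))) := by
      funext t; push_cast; ring
    rw [this, intervalIntegral.integral_const_mul, inner_eq x]
    ring
  rw [step3]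
  have hπ : (Real.pi : ℂ) ≠ 0 := Complex.ofReal_ne_zero.mpr Real.pi_ne_zero
  field_simp

/-- Dyadic block estimate for the Fourier coefficients of the circle convolution
`h` of an `α`-Hölder function `f` and a `β`-Hölder function `g`:
`∑_{2^k ≤ |n| ≤ 2^{k+1}} |ĥ(n)| ≤ C · C_f · C_g · 2^(−k(α+β))`. -/
theorem stmt_4 (α β : ℝ) (hα : α ∈ Set.Ioo (0:ℝ) 1) (hβ : β ∈ Set.Ioo (0:ℝ) 1) :
    ∃ C : ℝ, 0 < C ∧
      ∀ (f g : ℝ → ℝ) (Cf Cg : ℝ), 0 ≤ Cf → 0 ≤ Cg →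
        Continuous f → Continuous g →
        (∀ x, f (x + 2 * Real.pi) = f x) →
        (∀ x, g (x + 2 * Real.pi) = g x) →
        (∀ x y, |f x - f y| ≤ Cf * |x - y| ^ α) →
        (∀ x y, |g x - g y| ≤ Cg * |x - y| ^ β) →
        ∀ k : ℕ,
          ∑ n ∈ (Finset.Icc (-(2 ^ (k + 1) : ℤ)) (2 ^ (k + 1))).filter
              (fun n => (2 : ℤ) ^ k ≤ |n|),
            ‖(1 / (2 * (Real.pi : ℂ))) *
                ∫ t in (0:ℝ)..(2 * Real.pi),
                  ((∫ x in (0:ℝ)..(2 * Real.pi), f x * g (t - x) : ℝ) : ℂ) *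
                    Complex.exp (-(Complex.I * (n : ℂ) * (t : ℂ)))‖
            ≤ C * Cf * Cg * (2 : ℝ) ^ (-((k : ℝ) * (α + β))) := by
  refine ⟨Real.pi ^ 3, by positivity, ?_⟩
  intro f g Cf Cg hCf hCg hfc hgc hfp hgp hfH hgH k
  set s := (Finset.Icc (-(2 ^ (k + 1) : ℤ)) (2 ^ (k + 1))).filter
      (fun n => (2 : ℤ) ^ k ≤ |n|) with hs
  set h : ℝ := Real.pi / 2 ^ (k + 1) with hh
  have hhpos : 0 < h := by rw [hh]; positivity
  set uf : ℝ → ℂ := fun x => (f x : ℂ) with huf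
  set ug : ℝ → ℂ := fun x => (g x : ℂ) with hug
  set M1 : ℝ := Cf * h ^ α with hM1
  set M2 : ℝ := Cg * h ^ β with hM2
  have hM1nn : 0 ≤ M1 := by rw [hM1]; positivity
  have hM2nn : 0 ≤ M2 := by rw [hM2]; positivity
  -- block bounds
  have hfblock : ∑ n ∈ s, ‖cc uf n‖ ^ 2 ≤ M1 ^ 2 / 2 := by
    apply block_bound uf (by fun_prop) (fun x => by simp only [huf]; rw [hfp x]) M1 k
    intro x
    rw [huf]
    beta_reduce
    rw [← Complex.ofReal_sub, Complex.norm_real]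
    calc |f (x + h) - f x| ≤ Cf * |x + h - x| ^ α := hfH _ _
      _ = M1 := by rw [hM1]; congr 2; rw [show x + h - x = h by ring, abs_of_pos hhpos]
  have hgblock : ∑ n ∈ s, ‖cc ug n‖ ^ 2 ≤ M2 ^ 2 / 2 := by
    apply block_bound ug (by fun_prop) (fun x => by simp only [hug]; rw [hgp x]) M2 k
    intro x
    rw [hug]
    beta_reduce
    rw [← Complex.ofReal_sub, Complex.norm_real]
    calc |g (x + h) - g x| ≤ Cg * |x + h - x| ^ β := hgH _ _
      _ = M2 := by rw [hM2]; congr 2; rw [show x + h - x = h by ring, abs_of_pos hhpos]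
  -- rewrite summand
  have hsummand : ∀ n : ℤ, ‖(1 / (2 * (Real.pi : ℂ))) *
        ∫ t in (0:ℝ)..(2 * Real.pi),
          ((∫ x in (0:ℝ)..(2 * Real.pi), f x * g (t - x) : ℝ) : ℂ) *
            Complex.exp (-(Complex.I * (n : ℂ) * (t : ℂ)))‖
      = 2 * Real.pi * (‖cc uf n‖ * ‖cc ug n‖) := by
    intro n
    have : ((1 / (2 * (Real.pi : ℂ))) *
        ∫ t in (0:ℝ)..(2 * Real.pi),
          ((∫ x in (0:ℝ)..(2 * Real.pi), f x * g (t - x) : ℝ) : ℂ) *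
            Complex.exp (-(Complex.I * (n : ℂ) * (t : ℂ))))
        = cc (fun t => ((∫ x in (0:ℝ)..(2 * Real.pi), f x * g (t - x) : ℝ) : ℂ)) n := rfl
    rw [this, cc_conv f g hfc hgc hgp n, norm_mul, norm_mul]
    have : ‖(2 * (Real.pi : ℂ))‖ = 2 * Real.pi := by
      rw [show (2 * (Real.pi : ℂ)) = ((2 * Real.pi : ℝ) : ℂ) by push_cast; ring,
        Complex.norm_real]
      exact abs_of_pos Real.two_pi_pos
    rw [this, mul_assoc]
  rw [Finset.sum_congr rfl (fun n _ => hsummand n), ← Finset.mul_sum]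
  -- Cauchy-Schwarz
  have hCS : (∑ n ∈ s, ‖cc uf n‖ * ‖cc ug n‖) ≤ M1 * M2 / 2 := by
    have hsq := Finset.sum_mul_sq_le_sq_mul_sq s (fun n => ‖cc uf n‖) (fun n => ‖cc ug n‖)
    have hS0 : 0 ≤ ∑ n ∈ s, ‖cc uf n‖ * ‖cc ug n‖ :=
      Finset.sum_nonneg fun n _ => mul_nonneg (norm_nonneg _) (norm_nonneg _)
    have hT0 : 0 ≤ M1 * M2 / 2 := by positivity
    have h2 : (∑ n ∈ s, ‖cc uf n‖ * ‖cc ug n‖) ^ 2 ≤ (M1 * M2 / 2) ^ 2 := by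
      calc (∑ n ∈ s, ‖cc uf n‖ * ‖cc ug n‖) ^ 2
          ≤ (∑ n ∈ s, ‖cc uf n‖ ^ 2) * ∑ n ∈ s, ‖cc ug n‖ ^ 2 := hsq
        _ ≤ (M1 ^ 2 / 2) * (M2 ^ 2 / 2) := by
            apply mul_le_mul hfblock hgblock
              (Finset.sum_nonneg fun n _ => sq_nonneg _) (by positivity)
        _ = (M1 * M2 / 2) ^ 2 := by ring
    calc (∑ n ∈ s, ‖cc uf n‖ * ‖cc ug n‖)
        = Real.sqrt ((∑ n ∈ s, ‖cc uf n‖ * ‖cc ug n‖) ^ 2) := (Real.sqrt_sq hS0).symm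
      _ ≤ Real.sqrt ((M1 * M2 / 2) ^ 2) := Real.sqrt_le_sqrt h2
      _ = M1 * M2 / 2 := Real.sqrt_sq hT0
  -- final numeric estimate
  have hfin : 2 * Real.pi * (M1 * M2 / 2)
      ≤ Real.pi ^ 3 * Cf * Cg * (2 : ℝ) ^ (-((k : ℝ) * (α + β))) := by
    have hαβ0 : 0 ≤ α + β := by linarith [hα.1.le, hβ.1.le]
    have hαβ2 : α + β ≤ 2 := by linarith [hα.2.le, hβ.2.le]
    have hhab : h ^ α * h ^ β = h ^ (α + β) := (Real.rpow_add hhpos α β).symm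
    have hhexp : h ^ (α + β) ≤ Real.pi ^ 2 * (2 : ℝ) ^ (-((k : ℝ) * (α + β))) := by
      rw [hh, Real.div_rpow Real.pi_pos.le (by positivity)]
      have h1 : Real.pi ^ (α + β) ≤ Real.pi ^ 2 := by
        rw [show (Real.pi ^ 2 : ℝ) = Real.pi ^ ((2:ℕ):ℝ) by rw [Real.rpow_natCast]]
        exact Real.rpow_le_rpow_of_exponent_le (by linarith [Real.pi_gt_three]) (by push_cast; linarith)
      have h2 : ((2:ℝ) ^ (k + 1)) ^ (α + β) = (2:ℝ) ^ (((k:ℝ) + 1) * (α + β)) := by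
        rw [← Real.rpow_natCast 2 (k + 1), ← Real.rpow_mul (by norm_num)]
        push_cast
        ring_nf
      have h3 : ((2:ℝ) ^ (((k:ℝ) + 1) * (α + β)))⁻¹ ≤ (2 : ℝ) ^ (-((k : ℝ) * (α + β))) := by
        rw [← Real.rpow_neg (by norm_num)]
        apply Real.rpow_le_rpow_of_exponent_le (by norm_num)
        nlinarith [Nat.cast_nonneg (α := ℝ) k]
      rw [div_eq_mul_inv, h2]
      apply mul_le_mul h1 h3 (by positivity) (by positivity)
    calc 2 * Real.pi * (M1 * M2 / 2) = Real.pi * Cf * Cg * (h ^ α * h ^ β) := by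
          rw [hM1, hM2]; ring
      _ = Real.pi * Cf * Cg * h ^ (α + β) := by rw [hhab]
      _ ≤ Real.pi * Cf * Cg * (Real.pi ^ 2 * (2 : ℝ) ^ (-((k : ℝ) * (α + β)))) := by
          apply mul_le_mul_of_nonneg_left hhexp (by positivity)
      _ = Real.pi ^ 3 * Cf * Cg * (2 : ℝ) ^ (-((k : ℝ) * (α + β))) := by ring
  calc 2 * Real.pi * ∑ n ∈ s, ‖cc uf n‖ * ‖cc ug n‖
      ≤ 2 * Real.pi * (M1 * M2 / 2) :=
        mul_le_mul_of_nonneg_left hCS (by positivity)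
    _ ≤ Real.pi ^ 3 * Cf * Cg * (2 : ℝ) ^ (-((k : ℝ) * (α + β))) := hfin
end

section
/- Let α, β ∈ (0,1) with α + β > 1. There is an absolute constant C such that for all continuous 2π-periodic functions f, g : ℝ → ℝ, if f is α-Hölder with constant C_f and g is β-Hölder with constant C_g, and h is their circle convolution, then the weighted sum of Fourier coefficients converges absolutely with ∑_{n ∈ ℤ} |n| · |ĥ(n)| ≤ (C/(α+β−1)) · C_f · C_g. -/
open Real Complex intervalIntegral MeasureTheory

noncomputable def eC (n : ℤ) (t : ℝ) : ℂ := Complex.exp (-(Complex.I * n * t))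

lemma eC_add (n : ℤ) (s t : ℝ) : eC n (s + t) = eC n s * eC n t := by
  simp only [eC, ← Complex.exp_add]; push_cast; ring_nf

@[fun_prop]
lemma eC_cont (n : ℤ) : Continuous (eC n) := by
  unfold eC; fun_prop

lemma eC_per (n : ℤ) : Function.Periodic (eC n) (2*π) := by
  intro x
  rw [eC_add]
  have : eC n (2 * π) = 1 := by
    rw [eC]
    have : -(Complex.I * n * ((2*π : ℝ):ℂ)) = (-n : ℤ) * (2 * π * Complex.I) := by
      push_cast; ring
    rw [this, Complex.exp_int_mul_two_pi_mul_I]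
  rw [this, mul_one]

lemma eC_abs (n : ℤ) (t : ℝ) : ‖eC n t‖ = 1 := by
  have : -(Complex.I * n * t) = Complex.I * (-(n*t) : ℝ) := by push_cast; ring
  rw [eC, this, mul_comm, Complex.norm_exp_ofReal_mul_I]


lemma one_le_abs_exp_sub_one (θ : ℝ) (h1 : π/2 ≤ |θ|) (h2 : |θ| ≤ π + π/2) :
    1 ≤ ‖Complex.exp ((θ:ℂ) * Complex.I) - 1‖ := by
  have hcos : Real.cos θ ≤ 0 := by
    rw [← Real.cos_abs]
    exact Real.cos_nonpos_of_pi_div_two_le_of_le h1 (by linarith)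
  have hre : (Complex.exp ((θ:ℂ) * Complex.I) - 1).re = Real.cos θ - 1 := by
    rw [Complex.sub_re, Complex.one_re, Complex.exp_ofReal_mul_I_re]
  calc (1:ℝ) ≤ |Real.cos θ - 1| := by rw [abs_sub_comm, _root_.abs_of_nonneg (by linarith : (0:ℝ) ≤ 1 - Real.cos θ)]; linarith
    _ = |(Complex.exp ((θ:ℂ) * Complex.I) - 1).re| := by rw [hre]
    _ ≤ ‖Complex.exp ((θ:ℂ) * Complex.I) - 1‖ := Complex.abs_re_le_norm _

lemma one_minus_r (s : ℝ) (hs : 0 < s) (hs1 : s ≤ 1) :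
    ((1:ℝ) - (1/2:ℝ) ^ s)⁻¹ ≤ 4 / s := by
  have hlog2 : (0.6931471803:ℝ) < Real.log 2 := Real.log_two_gt_d9
  have hlog2' : Real.log 2 < 1 := by
    have := Real.log_two_lt_d9; linarith
  have hx : (0:ℝ) < s * Real.log 2 := by positivity
  have hexp : 1 + s * Real.log 2 ≤ (2:ℝ) ^ s := by
    rw [Real.rpow_def_of_pos (by norm_num : (0:ℝ) < 2)]
    have := Real.add_one_le_exp (Real.log 2 * s)
    linarith [this, (by ring : Real.log 2 * s = s * Real.log 2)]
  have h2s : (1/2:ℝ) ^ s = ((2:ℝ) ^ s)⁻¹ := by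
    rw [one_div, Real.inv_rpow (by norm_num)]
  have h2pos : (0:ℝ) < (2:ℝ) ^ s := Real.rpow_pos_of_pos (by norm_num) s
  have hinv : ((2:ℝ) ^ s)⁻¹ ≤ (1 + s * Real.log 2)⁻¹ := by
    apply inv_anti₀ (by linarith) hexp
  have hkey : (1:ℝ) - (1/2:ℝ) ^ s ≥ s/4 := by
    rw [h2s]
    have h3 : (1 + s * Real.log 2)⁻¹ = 1 - (s * Real.log 2)/(1 + s*Real.log 2) := by
      field_simp
      ring
    have h4 : (s * Real.log 2)/(1 + s*Real.log 2) ≥ s/4 := by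
      rw [ge_iff_le, div_le_div_iff₀ (by norm_num) (by linarith)]
      nlinarith
    nlinarith [hinv]
  rw [inv_le_comm₀ (by linarith) (by positivity)]
  rw [inv_div]
  linarith

lemma coeff_shift (u : ℝ → ℝ) (hu : Continuous u) (hper : ∀ x, u (x + 2*π) = u x)
    (n : ℤ) (δ : ℝ) :
    (∫ x in (0:ℝ)..2*π, ((u (x+δ) - u x : ℝ) : ℂ) * eC n x)
      = (Complex.exp (Complex.I*n*δ) - 1) * ∫ x in (0:ℝ)..2*π, (u x : ℂ) * eC n x := by
  have hper' : Function.Periodic (fun x => (u x:ℂ) * eC n x) (2*π) := by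
    intro x
    have h1 : eC n (x + 2*π) = eC n x := by
      rw [eC_add]
      have : eC n (2 * π) = 1 := by
        rw [eC]
        have : -(Complex.I * n * ((2*π : ℝ):ℂ)) = (-n : ℤ) * (2 * π * Complex.I) := by
          push_cast; ring
        rw [this, Complex.exp_int_mul_two_pi_mul_I]
      rw [this, mul_one]
    simp only [hper x, h1]
  have hint1 : IntervalIntegrable (fun x => (u (x+δ) : ℂ) * eC n x) volume 0 (2*π) := by
    apply Continuous.intervalIntegrable; fun_prop
  have hint2 : IntervalIntegrable (fun x => (u x : ℂ) * eC n x) volume 0 (2*π) := by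
    apply Continuous.intervalIntegrable; fun_prop
  have key : (∫ x in (0:ℝ)..2*π, (u (x+δ):ℂ) * eC n x) * eC n δ
      = ∫ x in (0:ℝ)..2*π, (u x:ℂ) * eC n x := by
    rw [← intervalIntegral.integral_mul_const]
    simp_rw [mul_assoc, ← eC_add]
    have h2 := intervalIntegral.integral_comp_add_right
      (a := (0:ℝ)) (b := 2*π) (fun x => (u x:ℂ) * eC n x) δ
    rw [h2]
    have h3 := hper'.intervalIntegral_add_eq (0+δ) 0
    simp only [zero_add] at h3 ⊢
    rw [show δ + 2*π = 2*π + δ by ring] at h3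
    simpa using h3
  have hne : eC n δ ≠ 0 := Complex.exp_ne_zero _
  have hinv : Complex.exp (Complex.I*n*δ) * eC n δ = 1 := by
    rw [eC, ← Complex.exp_add]
    ring_nf
    exact Complex.exp_zero
  have hshift : (∫ x in (0:ℝ)..2*π, (u (x+δ):ℂ) * eC n x)
      = Complex.exp (Complex.I*n*δ) * ∫ x in (0:ℝ)..2*π, (u x:ℂ) * eC n x := by
    rw [← key, mul_left_comm, hinv, mul_one]
  rw [show (fun x => ((u (x+δ) - u x : ℝ) : ℂ) * eC n x)
      = fun x => (u (x+δ):ℂ) * eC n x - (u x:ℂ) * eC n x by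
    funext x; push_cast; ring]
  rw [intervalIntegral.integral_sub hint1 hint2, hshift]
  ring

lemma bessel (V : ℝ → ℂ) (hV : Continuous V) (hper : Function.Periodic V (2*π)) (S : Finset ℤ) :
    ∑ n ∈ S, ‖(1/(2*(π:ℂ))) * ∫ x in (0:ℝ)..2*π, V x * eC n x‖ ^ 2
      ≤ (1/(2*π)) * ∫ x in (0:ℝ)..2*π, ‖V x‖ ^ 2 := by
  haveI : Fact (0 < 2*π) := ⟨by positivity⟩
  set F : AddCircle (2*π) → ℂ := hper.lift with hF
  have hFc : Continuous F := Continuous.quotient_liftOn' hV _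
  set Fc : C(AddCircle (2*π), ℂ) := ⟨F, hFc⟩
  set fLp := ContinuousMap.toLp (E := ℂ) 2 (AddCircle.haarAddCircle) ℂ Fc with hfLp
  have hae : (fLp : AddCircle (2*π) → ℂ) =ᵐ[AddCircle.haarAddCircle] F :=
    ContinuousMap.coeFn_toLp AddCircle.haarAddCircle Fc
  -- coefficients agree
  have hcoeff : ∀ n : ℤ, fourierCoeff (fLp : AddCircle (2*π) → ℂ) n = fourierCoeff F n := by
    intro n
    unfold fourierCoeff
    apply MeasureTheory.integral_congr_ae
    filter_upwards [hae] with t ht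
    rw [ht]
  -- coefficient as interval integral
  have hcoeff2 : ∀ n : ℤ, fourierCoeff F n
      = (1/(2*(π:ℂ))) * ∫ x in (0:ℝ)..2*π, V x * eC n x := by
    intro n
    rw [fourierCoeff_eq_intervalIntegral F n 0]
    have : ∀ x : ℝ, (fourier (-n) (x : AddCircle (2*π))) • F (x : AddCircle (2*π))
        = V x * eC n x := by
      intro x
      rw [fourier_coe_apply]
      have h2 : F (x : AddCircle (2*π)) = V x := hper.lift_coe x
      rw [h2, smul_eq_mul, mul_comm]
      congr 1
      unfold eC
      congr 1
      have hπ : (π:ℂ) ≠ 0 := by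
        simp [Complex.ofReal_ne_zero, Real.pi_ne_zero]
      push_cast
      field_simp
    simp_rw [this]
    rw [zero_add, real_smul]
    congr 1
    push_cast
    ring
  have hpars := tsum_sq_fourierCoeff fLp
  have hsum : Summable fun n : ℤ => ‖fourierCoeff ((fLp : AddCircle (2*π) → ℂ)) n‖ ^ 2 := by
    have hm := lp.memℓp (fourierBasis.repr fLp)
    have h2 := (memℓp_gen_iff (p := 2) (by norm_num) (f := fourierBasis.repr fLp)).1 hm
    have h3 : ∀ i : ℤ, ‖(fourierBasis.repr fLp) i‖ ^ (ENNReal.toReal 2)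
        = ‖fourierCoeff ((fLp : AddCircle (2*π) → ℂ)) i‖ ^ 2 := by
      intro i
      rw [fourierBasis_repr]
      norm_num
    exact (summable_congr h3).1 h2
  have hRHS : (∫ t : AddCircle (2*π), ‖(fLp : AddCircle (2*π) → ℂ) t‖ ^ 2 ∂AddCircle.haarAddCircle)
      = (1/(2*π)) * ∫ x in (0:ℝ)..2*π, ‖V x‖ ^ 2 := by
    have e1 : (∫ t : AddCircle (2*π), ‖(fLp : AddCircle (2*π) → ℂ) t‖ ^ 2 ∂AddCircle.haarAddCircle)
        = ∫ t : AddCircle (2*π), ‖F t‖ ^ 2 ∂AddCircle.haarAddCircle := by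
      apply MeasureTheory.integral_congr_ae
      filter_upwards [hae] with t ht
      rw [ht]
    have e2 := AddCircle.intervalIntegral_preimage (2*π) 0 (fun t => ‖F t‖^2)
    rw [AddCircle.volume_eq_smul_haarAddCircle, MeasureTheory.integral_smul_measure,
      ENNReal.toReal_ofReal (by positivity : (0:ℝ) ≤ 2*π)] at e2
    have e3 : ∀ x : ℝ, ‖F (x : AddCircle (2*π))‖^2 = ‖V x‖ ^ 2 := by
      intro x
      rw [hF, hper.lift_coe x]
    rw [e1]
    have e4 : (∫ x in (0:ℝ)..0+2*π, ‖F (x : AddCircle (2*π))‖^2)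
        = ∫ x in (0:ℝ)..2*π, ‖V x‖ ^ 2 := by
      rw [zero_add]
      exact intervalIntegral.integral_congr (fun x _ => e3 x)
    rw [e4] at e2
    have h2π : (2*π) ≠ 0 := by positivity
    field_simp at e2 ⊢
    rw [smul_eq_mul] at e2
    linarith [e2]
  calc ∑ n ∈ S, ‖(1/(2*(π:ℂ))) * ∫ x in (0:ℝ)..2*π, V x * eC n x‖ ^ 2
      = ∑ n ∈ S, ‖fourierCoeff ((fLp : AddCircle (2*π) → ℂ)) n‖ ^ 2 := by
        apply Finset.sum_congr rfl
        intro n _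
        rw [hcoeff, hcoeff2]
    _ ≤ ∑' n : ℤ, ‖fourierCoeff ((fLp : AddCircle (2*π) → ℂ)) n‖ ^ 2 :=
        Summable.sum_le_tsum S (fun n _ => by positivity) hsum
    _ = _ := by rw [hpars, hRHS]

lemma block_est (αe Cu : ℝ) (hCu : 0 ≤ Cu)
    (u : ℝ → ℝ) (hu : Continuous u) (hper : ∀ x, u (x + 2*π) = u x)
    (hhol : ∀ x y, |u x - u y| ≤ Cu * |x - y| ^ αe)
    (δ : ℝ) (hδ : 0 ≤ δ) (S : Finset ℤ)
    (hS : ∀ n ∈ S, 1 ≤ ‖Complex.exp (Complex.I*n*δ) - 1‖) :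
    ∑ n ∈ S, ‖(1/(2*(π:ℂ))) * ∫ x in (0:ℝ)..2*π, (u x:ℂ) * eC n x‖ ^ 2
      ≤ (Cu * δ ^ αe)^2 := by
  have hπ : (0:ℝ) < 2*π := by positivity
  set V : ℝ → ℂ := fun x => ((u (x+δ) - u x:ℝ):ℂ) with hV
  have hperV : Function.Periodic V (2*π) := by
    intro x
    simp only [hV]
    rw [show x + 2*π + δ = (x + δ) + 2*π by ring, hper (x+δ), hper x]
  have hVc : Continuous V := by
    apply Complex.continuous_ofReal.comp
    exact (hu.comp (continuous_id.add continuous_const)).sub hu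
  have hbes := bessel V hVc hperV S
  have hterm : ∀ n ∈ S,
      ‖(1/(2*(π:ℂ))) * ∫ x in (0:ℝ)..2*π, (u x:ℂ) * eC n x‖ ^ 2
        ≤ ‖(1/(2*(π:ℂ))) * ∫ x in (0:ℝ)..2*π, V x * eC n x‖ ^ 2 := by
    intro n hn
    rw [show (fun x => V x * eC n x) = fun x => ((u (x+δ) - u x:ℝ):ℂ) * eC n x from rfl]
    rw [coeff_shift u hu hper n δ]
    rw [show (1/(2*(π:ℂ))) * ((Complex.exp (Complex.I*n*δ) - 1)
          * ∫ x in (0:ℝ)..2*π, (u x:ℂ) * eC n x)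
        = (Complex.exp (Complex.I*n*δ) - 1)
          * ((1/(2*(π:ℂ))) * ∫ x in (0:ℝ)..2*π, (u x:ℂ) * eC n x) by ring]
    have habs : ‖(Complex.exp (Complex.I*n*δ) - 1)
          * ((1/(2*(π:ℂ))) * ∫ x in (0:ℝ)..2*π, (u x:ℂ) * eC n x)‖
        = ‖Complex.exp (Complex.I*n*δ) - 1‖
          * ‖(1/(2*(π:ℂ))) * ∫ x in (0:ℝ)..2*π, (u x:ℂ) * eC n x‖ := norm_mul _ _
    rw [habs]
    have h1 := hS n hn
    have h2 : (0:ℝ) ≤ ‖(1/(2*(π:ℂ))) * ∫ x in (0:ℝ)..2*π, (u x:ℂ) * eC n x‖ :=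
      norm_nonneg _
    rw [mul_pow]
    have hc2 : (1:ℝ) ≤ ‖Complex.exp (Complex.I*n*δ) - 1‖ ^ 2 := one_le_pow₀ h1
    exact le_mul_of_one_le_left (sq_nonneg _) hc2
  have hint : (1/(2*π)) * (∫ x in (0:ℝ)..2*π, ‖V x‖ ^ 2) ≤ (Cu * δ ^ αe)^2 := by
    have hmono : (∫ x in (0:ℝ)..2*π, ‖V x‖ ^ 2)
        ≤ ∫ _x in (0:ℝ)..2*π, (Cu * δ ^ αe)^2 := by
      apply intervalIntegral.integral_mono_on hπ.le
      · exact ((continuous_norm.comp hVc).pow 2).intervalIntegrable _ _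
      · exact intervalIntegrable_const
      · intro x _
        simp only [hV, Complex.norm_real, Real.norm_eq_abs]
        have := hhol (x+δ) x
        rw [show x + δ - x = δ by ring, _root_.abs_of_nonneg hδ] at this
        exact pow_le_pow_left₀ (abs_nonneg _) this 2
    rw [intervalIntegral.integral_const, smul_eq_mul, sub_zero] at hmono
    calc (1/(2*π)) * (∫ x in (0:ℝ)..2*π, ‖V x‖ ^ 2)
        ≤ (1/(2*π)) * (2*π * (Cu * δ ^ αe)^2) := by
          apply mul_le_mul_of_nonneg_left hmono (by positivity)
      _ = (Cu * δ ^ αe)^2 := by field_simp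
  calc ∑ n ∈ S, ‖(1/(2*(π:ℂ))) * ∫ x in (0:ℝ)..2*π, (u x:ℂ) * eC n x‖ ^ 2
      ≤ ∑ n ∈ S, ‖(1/(2*(π:ℂ))) * ∫ x in (0:ℝ)..2*π, V x * eC n x‖ ^ 2 :=
        Finset.sum_le_sum hterm
    _ ≤ (1/(2*π)) * ∫ x in (0:ℝ)..2*π, ‖V x‖ ^ 2 := hbes
    _ ≤ (Cu * δ ^ αe)^2 := hint

noncomputable def coefA (u : ℝ → ℝ) (n : ℤ) : ℝ :=
  ‖(1/(2*(π:ℂ))) * ∫ x in (0:ℝ)..2*π, (u x:ℂ) * eC n x‖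

lemma coefA_nonneg (u : ℝ → ℝ) (n : ℤ) : 0 ≤ coefA u n := norm_nonneg _

lemma block_est' (αe Cu : ℝ) (hCu : 0 ≤ Cu)
    (u : ℝ → ℝ) (hu : Continuous u) (hper : ∀ x, u (x + 2*π) = u x)
    (hhol : ∀ x y, |u x - u y| ≤ Cu * |x - y| ^ αe)
    (δ : ℝ) (hδ : 0 ≤ δ) (S : Finset ℤ)
    (hS : ∀ n ∈ S, 1 ≤ ‖Complex.exp (Complex.I*n*δ) - 1‖) :
    ∑ n ∈ S, coefA u n ^ 2 ≤ (Cu * δ ^ αe)^2 :=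
  block_est αe Cu hCu u hu hper hhol δ hδ S hS

lemma conv_factor (f g : ℝ → ℝ) (hf : Continuous f) (hg : Continuous g)
    (hgper : ∀ x, g (x + 2*π) = g x) (n : ℤ) :
    (∫ t in (0:ℝ)..2*π, ((∫ x in (0:ℝ)..2*π, f x * g (t-x) : ℝ) : ℂ) * eC n t)
      = (∫ x in (0:ℝ)..2*π, (f x:ℂ) * eC n x) * (∫ x in (0:ℝ)..2*π, (g x:ℂ) * eC n x) := by
  have h2π : (0:ℝ) ≤ 2*π := by positivity
  have hgper' : Function.Periodic (fun s => (g s:ℂ) * eC n s) (2*π) := by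
    intro x
    simp only [hgper x, eC_per n x]
  have key : ∀ x : ℝ, (∫ t in (0:ℝ)..2*π, (g (t-x):ℂ) * eC n t)
      = (∫ s in (0:ℝ)..2*π, (g s:ℂ) * eC n s) * eC n x := by
    intro x
    have e1 : ∀ t:ℝ, (g (t-x):ℂ) * eC n t = ((g (t-x):ℂ) * eC n (t-x)) * eC n x := by
      intro t; rw [mul_assoc, ← eC_add, sub_add_cancel]
    simp_rw [e1]
    rw [intervalIntegral.integral_mul_const]
    congr 1
    rw [intervalIntegral.integral_comp_sub_right (fun s => (g s:ℂ) * eC n s) x]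
    have h3 := hgper'.intervalIntegral_add_eq (0 - x) 0
    simp only [zero_add, zero_sub] at h3 ⊢
    rw [show (2*π - x) = -x + 2*π by ring]
    simpa using h3
  have hswap : (∫ t in Set.Ioc (0:ℝ) (2*π), ∫ x in Set.Ioc (0:ℝ) (2*π),
        ((f x * g (t-x) : ℝ):ℂ) * eC n t)
      = ∫ x in Set.Ioc (0:ℝ) (2*π), ∫ t in Set.Ioc (0:ℝ) (2*π),
        ((f x * g (t-x) : ℝ):ℂ) * eC n t := by
    apply MeasureTheory.integral_integral_swap
    have hGc : Continuous (fun p : ℝ × ℝ => ((f p.2 * g (p.1 - p.2) : ℝ):ℂ) * eC n p.1) := by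
      apply Continuous.mul
      · apply Complex.continuous_ofReal.comp
        exact (hf.comp continuous_snd).mul (hg.comp (continuous_fst.sub continuous_snd))
      · exact (eC_cont n).comp continuous_fst
    rw [Measure.prod_restrict]
    exact ((hGc.continuousOn).integrableOn_compact
      (isCompact_Icc.prod isCompact_Icc)).mono_set
      (Set.prod_mono Set.Ioc_subset_Icc_self Set.Ioc_subset_Icc_self)
  calc (∫ t in (0:ℝ)..2*π, ((∫ x in (0:ℝ)..2*π, f x * g (t-x) : ℝ) : ℂ) * eC n t)
      = ∫ t in (0:ℝ)..2*π, ∫ x in (0:ℝ)..2*π, ((f x * g (t-x) : ℝ):ℂ) * eC n t := by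
        refine intervalIntegral.integral_congr fun t _ => ?_
        rw [← intervalIntegral.integral_ofReal, ← intervalIntegral.integral_mul_const]
    _ = ∫ x in (0:ℝ)..2*π, ∫ t in (0:ℝ)..2*π, ((f x * g (t-x) : ℝ):ℂ) * eC n t := by
        simp_rw [intervalIntegral.integral_of_le h2π]
        exact hswap
    _ = ∫ x in (0:ℝ)..2*π, (f x:ℂ)
          * ((∫ s in (0:ℝ)..2*π, (g s:ℂ) * eC n s) * eC n x) := by
        refine intervalIntegral.integral_congr fun x _ => ?_
        have e2 : ∀ t:ℝ, ((f x * g (t-x) : ℝ):ℂ) * eC n t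
            = (f x:ℂ) * ((g (t-x):ℂ) * eC n t) := by
          intro t; push_cast; ring
        simp_rw [e2]
        rw [intervalIntegral.integral_const_mul, key x]
    _ = _ := by
        have e3 : ∀ x:ℝ, (f x:ℂ) * ((∫ s in (0:ℝ)..2*π, (g s:ℂ) * eC n s) * eC n x)
            = ((f x:ℂ) * eC n x) * (∫ s in (0:ℝ)..2*π, (g s:ℂ) * eC n s) := by
          intro x; ring
        simp_rw [e3]
        rw [intervalIntegral.integral_mul_const]

lemma dyadic_arith (α β s : ℝ) (hs : s = α+β-1) (k : ℕ) :
    (2:ℝ)^(k+1) * (((1/2:ℝ)^k) ^ (α+β)) = 2 * ((1/2:ℝ)^s)^k := by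
  have h2 : ((1/2:ℝ)^k : ℝ) = (2:ℝ) ^ (-(k:ℝ)) := by
    have e : (1/2:ℝ)^k = ((2:ℝ)^k)⁻¹ := by rw [one_div, inv_pow]
    rw [e, Real.rpow_neg (by norm_num : (0:ℝ) ≤ 2), Real.rpow_natCast]
  have h3 : ((1/2:ℝ)^s) = (2:ℝ)^(-s) := by
    rw [one_div, Real.inv_rpow (by norm_num : (0:ℝ) ≤ 2), ← Real.rpow_neg (by norm_num)]
  rw [h2, h3]
  rw [← Real.rpow_natCast ((2:ℝ)^(-s)) k, ← Real.rpow_natCast (2:ℝ) (k+1)]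
  rw [← Real.rpow_mul (by norm_num : (0:ℝ) ≤ 2) (-(k:ℝ)) (α+β)]
  rw [← Real.rpow_mul (by norm_num : (0:ℝ) ≤ 2) (-s) (k:ℝ)]
  rw [← Real.rpow_add (by norm_num : (0:ℝ) < 2)]
  have e2 : (2:ℝ) * (2:ℝ)^((-s)*(k:ℝ)) = (2:ℝ)^(1 + (-s)*(k:ℝ)) := by
    rw [Real.rpow_add (by norm_num : (0:ℝ) < 2), Real.rpow_one]
  rw [e2]
  congr 1
  push_cast
  rw [hs]
  ring



/-- For the circle convolution `h` of an `α`-Hölder function `f` and a `β`-Hölder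
function `g`, with `α + β > 1`, the weighted sum of Fourier coefficients
`∑_{n ∈ ℤ} |n|·|ĥ(n)|` converges absolutely and is bounded by
`(C/(α+β−1))·C_f·C_g` for an absolute constant `C`. -/
theorem stmt_5 (α β : ℝ) (hα : α ∈ Set.Ioo (0:ℝ) 1) (hβ : β ∈ Set.Ioo (0:ℝ) 1)
    (hαβ : 1 < α + β) :
    ∃ C : ℝ, 0 < C ∧
      ∀ (f g : ℝ → ℝ) (Cf Cg : ℝ), 0 ≤ Cf → 0 ≤ Cg →
        Continuous f → Continuous g →
        (∀ x, f (x + 2 * Real.pi) = f x) →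
        (∀ x, g (x + 2 * Real.pi) = g x) →
        (∀ x y, |f x - f y| ≤ Cf * |x - y| ^ α) →
        (∀ x y, |g x - g y| ≤ Cg * |x - y| ^ β) →
        Summable (fun n : ℤ => (|n| : ℝ) *
          ‖(1 / (2 * (Real.pi : ℂ))) *
            ∫ t in (0:ℝ)..(2 * Real.pi),
              ((∫ x in (0:ℝ)..(2 * Real.pi), f x * g (t - x) : ℝ) : ℂ) *
                Complex.exp (-(Complex.I * (n : ℂ) * (t : ℂ)))‖) ∧
        (∑' n : ℤ, (|n| : ℝ) *
          ‖(1 / (2 * (Real.pi : ℂ))) *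
            ∫ t in (0:ℝ)..(2 * Real.pi),
              ((∫ x in (0:ℝ)..(2 * Real.pi), f x * g (t - x) : ℝ) : ℂ) *
                Complex.exp (-(Complex.I * (n : ℂ) * (t : ℂ)))‖)
          ≤ C / (α + β - 1) * Cf * Cg := by
  obtain ⟨hα0, hα1⟩ := hα
  obtain ⟨hβ0, hβ1⟩ := hβ
  have hπ : (0:ℝ) < π := Real.pi_pos
  refine ⟨64 * π^3 / 9, by positivity, ?_⟩
  intro f g Cf Cg hCf hCg hf hg hfper hgper hfhol hghol
  set s : ℝ := α + β - 1 with hsdef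
  have hs : 0 < s := by rw [hsdef]; linarith
  have hs1 : s ≤ 1 := by rw [hsdef]; linarith
  set a : ℤ → ℝ := fun n => (|n| : ℝ) *
          ‖(1 / (2 * (Real.pi : ℂ))) *
            ∫ t in (0:ℝ)..(2 * Real.pi),
              ((∫ x in (0:ℝ)..(2 * Real.pi), f x * g (t - x) : ℝ) : ℂ) *
                Complex.exp (-(Complex.I * (n : ℂ) * (t : ℂ)))‖ with ha
  have hann : ∀ n, 0 ≤ a n := by
    intro n
    rw [ha]
    positivity
  have han : ∀ n : ℤ, a n = |(n:ℝ)| * (2*π * (coefA f n * coefA g n)) := by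
    intro n
    have hexp : (fun t : ℝ => ((∫ x in (0:ℝ)..(2 * Real.pi), f x * g (t - x) : ℝ) : ℂ) *
        Complex.exp (-(Complex.I * (n : ℂ) * (t : ℂ))))
        = fun t : ℝ => ((∫ x in (0:ℝ)..(2 * Real.pi), f x * g (t - x) : ℝ) : ℂ) * eC n t := rfl
    rw [ha]
    simp only [hexp]
    rw [conv_factor f g hf hg hgper n]
    congr 1
    have hne : (2*(π:ℂ)) ≠ 0 := by
      simp [Complex.ofReal_ne_zero, Real.pi_ne_zero]
    have h1 : (1/(2*(π:ℂ))) * ((∫ x in (0:ℝ)..2*π, (f x:ℂ) * eC n x)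
          * (∫ x in (0:ℝ)..2*π, (g x:ℂ) * eC n x))
        = (2*(π:ℂ)) * (((1/(2*(π:ℂ))) * ∫ x in (0:ℝ)..2*π, (f x:ℂ) * eC n x)
          * ((1/(2*(π:ℂ))) * ∫ x in (0:ℝ)..2*π, (g x:ℂ) * eC n x)) := by
      field_simp
    rw [h1, norm_mul]
    have h2 : ‖2*(π:ℂ)‖ = 2*π := by
      rw [show (2*(π:ℂ)) = ((2*π:ℝ):ℂ) by push_cast; rfl, Complex.norm_real, Real.norm_eq_abs,
        _root_.abs_of_pos (by positivity)]
    rw [h2, norm_mul]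
    rfl
  -- the partial sum bound
  have hpartial : ∀ S : Finset ℤ, ∑ n ∈ S, a n ≤ 64 * π^3 / 9 / s * Cf * Cg := by
    intro S
    have ha0 : a 0 = 0 := by rw [ha]; simp
    rw [← Finset.sum_erase S ha0]
    set S' := S.erase 0 with hS'
    have h0 : ∀ n ∈ S', n ≠ 0 := fun n hn => Finset.ne_of_mem_erase hn
    set kk : ℤ → ℕ := fun n => Nat.log 2 n.natAbs with hkk
    set M := (S'.sup kk) + 1 with hM
    have hmaps : ∀ n ∈ S', kk n ∈ Finset.range M := fun n hn =>
      Finset.mem_range.2 (Nat.lt_succ_of_le (Finset.le_sup hn))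
    rw [← Finset.sum_fiberwise_of_maps_to hmaps a]
    set r : ℝ := (1/2:ℝ) ^ s with hr
    have hr0 : (0:ℝ) ≤ r := Real.rpow_nonneg (by norm_num) s
    have hr1 : r < 1 := Real.rpow_lt_one (by norm_num) (by norm_num) hs
    have hfiber : ∀ k ∈ Finset.range M,
        ∑ n ∈ S'.filter (fun n => kk n = k), a n
          ≤ (16*π^3/9 * (Cf*Cg)) * r^k := by
      intro k _
      set T := S'.filter (fun n => kk n = k) with hT
      set δ : ℝ := (2*π/3) * (1/2:ℝ)^k with hδ
      have hδpos : 0 < δ := by positivity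
      have hpowk : (2:ℝ)^k * (1/2:ℝ)^k = 1 := by
        rw [← mul_pow]; norm_num
      have hTblock : ∀ n ∈ T, (2:ℝ)^k ≤ |(n:ℝ)| ∧ |(n:ℝ)| ≤ 2^(k+1) := by
        intro n hn
        obtain ⟨hnS, hkn⟩ := Finset.mem_filter.1 hn
        have hne : n.natAbs ≠ 0 := Int.natAbs_ne_zero.2 (h0 n hnS)
        have l1 : 2^k ≤ n.natAbs := hkn ▸ Nat.pow_log_le_self 2 hne
        have l2 : n.natAbs < 2^(k+1) := hkn ▸ Nat.lt_pow_succ_log_self (by norm_num) _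
        have habs : |(n:ℝ)| = (n.natAbs : ℝ) := by
          rw [Nat.cast_natAbs]; push_cast; ring
        constructor
        · rw [habs]; exact_mod_cast l1
        · rw [habs]; exact_mod_cast l2.le
      have hSexp : ∀ n ∈ T, 1 ≤ ‖Complex.exp (Complex.I*n*δ) - 1‖ := by
        intro n hn
        obtain ⟨l1, l2⟩ := hTblock n hn
        have heq : Complex.I*(n:ℂ)*((δ:ℝ):ℂ) = (((n:ℝ)*δ : ℝ):ℂ) * Complex.I := by
          push_cast; ring
        rw [heq]
        have habs : |(n:ℝ)*δ| = |(n:ℝ)| * δ := by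
          rw [abs_mul, _root_.abs_of_pos hδpos]
        have hlow : 2*π/3 ≤ |(n:ℝ)| * δ := by
          have := mul_le_mul_of_nonneg_right l1 hδpos.le
          calc 2*π/3 = (2:ℝ)^k * δ := by
                rw [hδ, show (2:ℝ)^k * ((2*π/3) * (1/2:ℝ)^k)
                  = (2*π/3) * ((2:ℝ)^k * (1/2:ℝ)^k) by ring, hpowk, mul_one]
            _ ≤ |(n:ℝ)| * δ := this
        have hhigh : |(n:ℝ)| * δ ≤ 4*π/3 := by
          have := mul_le_mul_of_nonneg_right l2 hδpos.le
          calc |(n:ℝ)| * δ ≤ (2:ℝ)^(k+1) * δ := this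
            _ = 4*π/3 := by
                rw [hδ, pow_succ, show (2:ℝ)^k * 2 * ((2*π/3) * (1/2:ℝ)^k)
                  = 2 * (2*π/3) * ((2:ℝ)^k * (1/2:ℝ)^k) by ring, hpowk, mul_one]
                ring
        apply one_le_abs_exp_sub_one
        · rw [habs]; linarith
        · rw [habs]; linarith
      have hbf := block_est' α Cf hCf f hf hfper hfhol δ hδpos.le T hSexp
      have hbg := block_est' β Cg hCg g hg hgper hghol δ hδpos.le T hSexp
      have hcs : ∑ n ∈ T, coefA f n * coefA g n ≤ (Cf * δ^α) * (Cg * δ^β) := by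
        have h1 := Finset.sum_mul_sq_le_sq_mul_sq T (coefA f) (coefA g)
        have h2 : (∑ n ∈ T, coefA f n * coefA g n) ^ 2
            ≤ ((Cf*δ^α)*(Cg*δ^β))^2 := by
          calc (∑ n ∈ T, coefA f n * coefA g n) ^ 2
              ≤ (∑ n ∈ T, coefA f n ^ 2) * ∑ n ∈ T, coefA g n ^ 2 := h1
            _ ≤ (Cf*δ^α)^2 * (Cg*δ^β)^2 := by
                apply mul_le_mul hbf hbg (Finset.sum_nonneg fun n _ => sq_nonneg _)
                  (sq_nonneg _)
            _ = ((Cf*δ^α)*(Cg*δ^β))^2 := by ring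
        have hnn : 0 ≤ ∑ n ∈ T, coefA f n * coefA g n :=
          Finset.sum_nonneg fun n _ => mul_nonneg (coefA_nonneg f n) (coefA_nonneg g n)
        have hPnn : (0:ℝ) ≤ (Cf*δ^α)*(Cg*δ^β) := by positivity
        nlinarith [h2, hnn, hPnn]
      calc ∑ n ∈ T, a n
          = ∑ n ∈ T, |(n:ℝ)| * (2*π * (coefA f n * coefA g n)) :=
            Finset.sum_congr rfl (fun n _ => han n)
        _ ≤ ∑ n ∈ T, (2:ℝ)^(k+1) * (2*π * (coefA f n * coefA g n)) := by
            apply Finset.sum_le_sum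
            intro n hn
            exact mul_le_mul_of_nonneg_right (hTblock n hn).2
              (mul_nonneg (by positivity)
                (mul_nonneg (coefA_nonneg f n) (coefA_nonneg g n)))
        _ = (2:ℝ)^(k+1) * (2*π) * ∑ n ∈ T, coefA f n * coefA g n := by
            rw [Finset.mul_sum]
            apply Finset.sum_congr rfl
            intro n _; ring
        _ ≤ (2:ℝ)^(k+1) * (2*π) * ((Cf * δ^α) * (Cg * δ^β)) := by
            apply mul_le_mul_of_nonneg_left hcs (by positivity)
        _ ≤ (16*π^3/9 * (Cf*Cg)) * r^k := by
            have hδab : δ^α * δ^β = δ^(α+β) := (Real.rpow_add hδpos α β).symm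
            have hδsplit : δ^(α+β) = (2*π/3)^(α+β) * ((1/2:ℝ)^k)^(α+β) := by
              rw [hδ, Real.mul_rpow (by positivity) (by positivity)]
            have h23 : (1:ℝ) ≤ 2*π/3 := by nlinarith [Real.pi_gt_three]
            have hexple : (2*π/3 : ℝ)^(α+β) ≤ (2*π/3)^(2:ℝ) :=
              Real.rpow_le_rpow_of_exponent_le h23 (by linarith)
            have hsq : (2*π/3 : ℝ)^(2:ℝ) = (2*π/3)^(2:ℕ) := by
              exact_mod_cast Real.rpow_natCast (2*π/3 : ℝ) 2
            have hdy := dyadic_arith α β s hsdef k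
            have hrk : (0:ℝ) ≤ r^k := pow_nonneg hr0 k
            have hpos1 : (0:ℝ) < (2:ℝ)^(k+1) := by positivity
            calc (2:ℝ)^(k+1) * (2*π) * ((Cf * δ^α) * (Cg * δ^β))
                = (2*π) * Cf * Cg * ((2:ℝ)^(k+1) * (δ^α * δ^β)) := by ring
              _ = (2*π) * Cf * Cg * ((2*π/3)^(α+β) * ((2:ℝ)^(k+1) * ((1/2:ℝ)^k)^(α+β))) := by
                  rw [hδab, hδsplit]; ring
              _ = (2*π) * Cf * Cg * ((2*π/3)^(α+β) * (2 * r^k)) := by rw [hdy]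
              _ ≤ (2*π) * Cf * Cg * ((2*π/3)^(2:ℝ) * (2 * r^k)) := by
                  apply mul_le_mul_of_nonneg_left _ (by positivity)
                  apply mul_le_mul_of_nonneg_right hexple (by positivity)
              _ = (16*π^3/9 * (Cf*Cg)) * r^k := by
                  rw [hsq]; ring
    calc ∑ k ∈ Finset.range M, ∑ n ∈ S'.filter (fun n => kk n = k), a n
        ≤ ∑ k ∈ Finset.range M, (16*π^3/9 * (Cf*Cg)) * r^k :=
          Finset.sum_le_sum hfiber
      _ = (16*π^3/9 * (Cf*Cg)) * ∑ k ∈ Finset.range M, r^k := by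
          rw [Finset.mul_sum]
      _ ≤ (16*π^3/9 * (Cf*Cg)) * (1-r)⁻¹ := by
          apply mul_le_mul_of_nonneg_left _ (by positivity)
          have hsummable := summable_geometric_of_lt_one hr0 hr1
          have := Summable.sum_le_tsum (Finset.range M) (fun i _ => pow_nonneg hr0 i) hsummable
          rwa [tsum_geometric_of_lt_one hr0 hr1] at this
      _ ≤ (16*π^3/9 * (Cf*Cg)) * (4/s) := by
          apply mul_le_mul_of_nonneg_left (one_minus_r s hs hs1) (by positivity)
      _ = 64 * π^3 / 9 / s * Cf * Cg := by
          field_simp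
          ring
  constructor
  · exact summable_of_sum_le hann hpartial
  · exact Summable.tsum_le_of_sum_le (summable_of_sum_le hann hpartial) hpartial
end

section
/- With the eigenvalue-perturbation setup, assume moreover that B, η and v are twice differentiable at 0, and set 𝔜 = B″(0) − (B′(0))². Then the second logarithmic derivative of the eigenvalue at 0 satisfies η″(0)/η₀ − (η′(0)/η₀)² = v*(𝔜·v₀) + v*(𝔛·(𝔛·v₀)) − (v*(𝔛·v₀))² + (2/η₀)·v*(𝔛·(A·v′(0))). -/
/-- Eigenvalue perturbation: second logarithmic derivative of the eigenvalue.
With `𝔛 = B′(0)` and `𝔜 = B″(0) − (B′(0))²`,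
`η″(0)/η₀ − (η′(0)/η₀)² = v*(𝔜v₀) + v*(𝔛𝔛v₀) − (v*(𝔛v₀))² + (2/η₀)·v*(𝔛(A·v′(0)))`. -/
theorem stmt_9 {d : ℕ} (hd : 1 ≤ d)
    (A : (Fin d → ℝ) →L[ℝ] (Fin d → ℝ))
    (η₀ : ℝ) (hη₀ : η₀ ≠ 0) (v₀ : Fin d → ℝ)
    (vstar : (Fin d → ℝ) →L[ℝ] ℝ)
    (hvA : ∀ w, vstar (A w) = η₀ * vstar w) (hv₀ : vstar v₀ = 1)
    (B B' : ℝ → ((Fin d → ℝ) →L[ℝ] (Fin d → ℝ)))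
    (B'' : (Fin d → ℝ) →L[ℝ] (Fin d → ℝ))
    (η ηd : ℝ → ℝ) (ηdd : ℝ)
    (v vd : ℝ → Fin d → ℝ) (vdd : Fin d → ℝ)
    (hB0 : B 0 = ContinuousLinearMap.id ℝ (Fin d → ℝ))
    (hη0 : η 0 = η₀) (hv0 : v 0 = v₀)
    (hB' : ∀ᶠ t in nhds (0:ℝ), HasDerivAt B (B' t) t) (hB'' : HasDerivAt B' B'' 0)
    (hηd : ∀ᶠ t in nhds (0:ℝ), HasDerivAt η (ηd t) t) (hηdd : HasDerivAt ηd ηdd 0)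
    (hvd : ∀ᶠ t in nhds (0:ℝ), HasDerivAt v (vd t) t) (hvdd : HasDerivAt vd vdd 0)
    (heig : ∀ t, B t (A (v t)) = η t • v t)
    (hvt : ∀ t, vstar (v t) = 1) :
    ηdd / η₀ - (ηd 0 / η₀) ^ 2 =
      vstar ((B'' - (B' 0).comp (B' 0)) v₀) + vstar (B' 0 (B' 0 v₀))
        - vstar (B' 0 v₀) ^ 2 + (2 / η₀) * vstar (B' 0 (A (vd 0))) := by
  have hAv₀ : A v₀ = η₀ • v₀ := by
    have h := heig 0
    rw [hB0, hη0, hv0] at h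
    simpa using h
  -- key eventual identities
  have hkey : ∀ᶠ t in nhds (0:ℝ),
      (ηd t = vstar (B' t (A (v t))) + vstar (B t (A (vd t))) ∧ vstar (vd t) = 0) := by
    filter_upwards [hB', hηd, hvd] with t hBt hηt hvt'
    have hAvt : HasDerivAt (fun s => A (v s)) (A (vd t)) t :=
      A.hasFDerivAt.comp_hasDerivAt t hvt'
    have hF : HasDerivAt (fun s => B s (A (v s)))
        (B' t (A (v t)) + B t (A (vd t))) t := hBt.clm_apply hAvt
    have hg : HasDerivAt (fun s => vstar (B s (A (v s))))
        (vstar (B' t (A (v t))) + vstar (B t (A (vd t)))) t := by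
      simpa [Function.comp_def] using vstar.hasFDerivAt.comp_hasDerivAt t hF
    have heq : (fun s => vstar (B s (A (v s)))) = η := by
      funext s; rw [heig s]; simp [hvt s]
    rw [heq] at hg
    refine ⟨hηt.unique hg, ?_⟩
    have h1 : HasDerivAt (fun s => vstar (v s)) (vstar (vd t)) t :=
      vstar.hasFDerivAt.comp_hasDerivAt t hvt'
    have h2 : HasDerivAt (fun s => vstar (v s)) 0 t := by
      have he : (fun s => vstar (v s)) = fun _ => (1:ℝ) := funext hvt
      rw [he]; exact hasDerivAt_const t 1
    exact h1.unique h2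
  have hkey0 := hkey.self_of_nhds
  have hvd0 : vstar (vd 0) = 0 := hkey0.2
  -- vstar vdd = 0
  have hvdd0 : vstar vdd = 0 := by
    have h1 : HasDerivAt (fun s => vstar (vd s)) (vstar vdd) 0 :=
      vstar.hasFDerivAt.comp_hasDerivAt 0 hvdd
    have h2 : HasDerivAt (fun s => vstar (vd s)) 0 0 := by
      refine (hasDerivAt_const (0:ℝ) (0:ℝ)).congr_of_eventuallyEq ?_
      filter_upwards [hkey] with t ht using ht.2
    exact h1.unique h2
  -- first derivative at 0
  have hηd0 : ηd 0 = η₀ * vstar (B' 0 v₀) := by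
    have h := hkey0.1
    rw [hv0, hB0, hAv₀] at h
    simp only [ContinuousLinearMap.coe_id', id_eq] at h
    rw [h, map_smul, map_smul, hvA]
    simp [hvd0]
  -- second derivative at 0
  have hAvd0 : HasDerivAt (fun s => A (v s)) (A (vd 0)) 0 :=
    A.hasFDerivAt.comp_hasDerivAt 0 hvd.self_of_nhds
  have hAvdd : HasDerivAt (fun s => A (vd s)) (A vdd) 0 :=
    A.hasFDerivAt.comp_hasDerivAt 0 hvdd
  have hT1 : HasDerivAt (fun t => B' t (A (v t)))
      (B'' (A (v 0)) + B' 0 (A (vd 0))) 0 := hB''.clm_apply hAvd0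
  have hT2 : HasDerivAt (fun t => B t (A (vd t)))
      (B' 0 (A (vd 0)) + B 0 (A vdd)) 0 := hB'.self_of_nhds.clm_apply hAvdd
  have hGsum : HasDerivAt (fun t => vstar (B' t (A (v t))) + vstar (B t (A (vd t))))
      (vstar (B'' (A (v 0)) + B' 0 (A (vd 0))) + vstar (B' 0 (A (vd 0)) + B 0 (A vdd))) 0 := by
    have g1 : HasDerivAt (fun t => vstar (B' t (A (v t))))
        (vstar (B'' (A (v 0)) + B' 0 (A (vd 0)))) 0 := by
      simpa [Function.comp_def] using vstar.hasFDerivAt.comp_hasDerivAt 0 hT1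
    have g2 : HasDerivAt (fun t => vstar (B t (A (vd t))))
        (vstar (B' 0 (A (vd 0)) + B 0 (A vdd))) 0 := by
      simpa [Function.comp_def] using vstar.hasFDerivAt.comp_hasDerivAt 0 hT2
    exact g1.add g2
  have hηddeq : ηdd = vstar (B'' (A (v 0)) + B' 0 (A (vd 0)))
      + vstar (B' 0 (A (vd 0)) + B 0 (A vdd)) := by
    have h : HasDerivAt ηd (vstar (B'' (A (v 0)) + B' 0 (A (vd 0)))
        + vstar (B' 0 (A (vd 0)) + B 0 (A vdd))) 0 := by
      refine hGsum.congr_of_eventuallyEq ?_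
      filter_upwards [hkey] with t ht using ht.1
    exact hηdd.unique h
  have hηdd2 : ηdd = η₀ * vstar (B'' v₀) + 2 * vstar (B' 0 (A (vd 0))) := by
    rw [hηddeq, hv0, hAv₀, hB0]
    simp only [ContinuousLinearMap.coe_id', id_eq, map_add, map_smul]
    rw [hvA vdd]
    simp [hvdd0]
    ring
  rw [hηdd2, hηd0]
  simp only [ContinuousLinearMap.sub_apply, ContinuousLinearMap.comp_apply, map_sub]
  field_simp
  ring
end

section
/- With the eigenvalue-perturbation setup, assume B, η and v are twice differentiable at 0 and set 𝔜 = B″(0) − (B′(0))². Suppose in addition there are w ∈ ℝ^d and ν ∈ ℝ with ν ≠ η₀ such that A·w = ν·w, v*(w) = 0, 𝔜 = 0, 𝔛·v₀ = w, 𝔛·w = −v₀, and v′(0) = (η₀/(η₀ − ν))·w. Then η″(0)/η₀ − (η′(0)/η₀)² = (η₀ + ν)/(ν − η₀); in particular, if ν ≠ −η₀ this second logarithmic derivative is nonzero. -/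
/-- Eigenvalue perturbation: with a rotation-type perturbation mixing the
eigenvector `v₀` with another eigenvector `w` (eigenvalue `ν ≠ η₀`), the second
logarithmic derivative equals `(η₀ + ν)/(ν − η₀)`; in particular it is nonzero
when `ν ≠ −η₀`. -/
theorem stmt_10 {d : ℕ} (hd : 1 ≤ d)
    (A : (Fin d → ℝ) →L[ℝ] (Fin d → ℝ))
    (η₀ : ℝ) (hη₀ : η₀ ≠ 0) (v₀ : Fin d → ℝ)
    (vstar : (Fin d → ℝ) →L[ℝ] ℝ)
    (hvA : ∀ w, vstar (A w) = η₀ * vstar w) (hv₀ : vstar v₀ = 1)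
    (B B' : ℝ → ((Fin d → ℝ) →L[ℝ] (Fin d → ℝ)))
    (B'' : (Fin d → ℝ) →L[ℝ] (Fin d → ℝ))
    (η ηd : ℝ → ℝ) (ηdd : ℝ)
    (v vd : ℝ → Fin d → ℝ) (vdd : Fin d → ℝ)
    (hB0 : B 0 = ContinuousLinearMap.id ℝ (Fin d → ℝ))
    (hη0 : η 0 = η₀) (hv0 : v 0 = v₀)
    (hB' : ∀ᶠ t in nhds (0:ℝ), HasDerivAt B (B' t) t) (hB'' : HasDerivAt B' B'' 0)
    (hηd : ∀ᶠ t in nhds (0:ℝ), HasDerivAt η (ηd t) t) (hηdd : HasDerivAt ηd ηdd 0)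
    (hvd : ∀ᶠ t in nhds (0:ℝ), HasDerivAt v (vd t) t) (hvdd : HasDerivAt vd vdd 0)
    (heig : ∀ t, B t (A (v t)) = η t • v t)
    (hvt : ∀ t, vstar (v t) = 1)
    (w : Fin d → ℝ) (ν : ℝ) (hν : ν ≠ η₀)
    (hw : A w = ν • w) (hwv : vstar w = 0)
    (h𝔜 : B'' = (B' 0).comp (B' 0))
    (h𝔛v : B' 0 v₀ = w) (h𝔛w : B' 0 w = -v₀)
    (hvd0 : vd 0 = (η₀ / (η₀ - ν)) • w) :
    ηdd / η₀ - (ηd 0 / η₀) ^ 2 = (η₀ + ν) / (ν - η₀) ∧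
      (ν ≠ -η₀ → ηdd / η₀ - (ηd 0 / η₀) ^ 2 ≠ 0) := by
  have hν' : η₀ - ν ≠ 0 := sub_ne_zero.mpr (Ne.symm hν)
  have hAv0 : A v₀ = η₀ • v₀ := by
    have h := heig 0
    rw [hB0, hη0, hv0] at h
    simpa using h
  -- first derivative identity, eventually
  have hderiv : ∀ᶠ t in nhds (0:ℝ),
      (B' t) (A (v t)) + (B t) (A (vd t)) = η t • vd t + ηd t • v t := by
    filter_upwards [hB', hηd, hvd] with t hBt hηt hvt'
    have hAv : HasDerivAt (fun s => A (v s)) (A (vd t)) t :=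
      A.hasFDerivAt.comp_hasDerivAt t hvt'
    have h1 : HasDerivAt (fun s => B s (A (v s)))
        ((B' t) (A (v t)) + (B t) (A (vd t))) t := hBt.clm_apply hAv
    have h2 : HasDerivAt (fun s => η s • v s) (η t • vd t + ηd t • v t) t :=
      hηt.smul hvt'
    have heq : (fun s => B s (A (v s))) = fun s => η s • v s := funext heig
    rw [heq] at h1
    exact h1.unique h2
  have eq1 : (B' 0) (A v₀) + A (vd 0) = η₀ • vd 0 + ηd 0 • v₀ := by
    have h := hderiv.self_of_nhds
    rw [hB0, hη0, hv0] at h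
    simpa using h
  -- ηd 0 = 0
  have hηd0 : ηd 0 = 0 := by
    have h := congrArg vstar eq1
    simp only [map_add, map_smul, hAv0, hvd0, hvA, hv₀, hwv, h𝔛v, smul_eq_mul,
      mul_zero, mul_one, zero_add, add_zero] at h
    linarith
  -- second derivative identity at 0
  have hL : HasDerivAt (fun t => (B' t) (A (v t)) + (B t) (A (vd t)))
      ((B'' (A (v 0)) + (B' 0) (A (vd 0))) + ((B' 0) (A (vd 0)) + (B 0) (A vdd))) 0 := by
    have hAv : HasDerivAt (fun s => A (v s)) (A (vd 0)) 0 :=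
      A.hasFDerivAt.comp_hasDerivAt 0 hvd.self_of_nhds
    have hAvd : HasDerivAt (fun s => A (vd s)) (A vdd) 0 :=
      A.hasFDerivAt.comp_hasDerivAt 0 hvdd
    exact (hB''.clm_apply hAv).add (hB'.self_of_nhds.clm_apply hAvd)
  have hR : HasDerivAt (fun t => η t • vd t + ηd t • v t)
      ((η 0 • vdd + ηd 0 • vd 0) + (ηd 0 • vd 0 + ηdd • v 0)) 0 :=
    (hηd.self_of_nhds.smul hvdd).add (hηdd.smul hvd.self_of_nhds)
  have hL' : HasDerivAt (fun t => (B' t) (A (v t)) + (B t) (A (vd t)))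
      ((η 0 • vdd + ηd 0 • vd 0) + (ηd 0 • vd 0 + ηdd • v 0)) 0 :=
    hR.congr_of_eventuallyEq hderiv
  have eq2 := hL.unique hL'
  rw [hv0, hη0, hηd0] at eq2
  -- apply vstar to eq2
  have h := congrArg vstar eq2
  have c1 : vstar (B'' (A v₀)) = -η₀ := by
    rw [hAv0, h𝔜]
    simp only [ContinuousLinearMap.comp_apply, map_smul, h𝔛v, h𝔛w, smul_eq_mul]
    simp [hv₀]
  have c2 : vstar ((B' 0) (A (vd 0))) = -(η₀ * ν) / (η₀ - ν) := by
    rw [hvd0, map_smul, hw]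
    simp only [map_smul, h𝔛w, map_neg, hv₀, smul_eq_mul]
    field_simp
  rw [hB0] at h
  simp only [map_add, map_smul, c1, c2, hvA, hv₀, smul_eq_mul, zero_smul, map_zero,
    mul_one, zero_mul, add_zero, zero_add, ContinuousLinearMap.id_apply] at h
  have hνη : ν - η₀ ≠ 0 := sub_ne_zero.mpr hν
  have hηdd' : ηdd = η₀ * (η₀ + ν) / (ν - η₀) := by
    field_simp at h ⊢
    linear_combination h
  constructor
  · rw [hηdd', hηd0]
    field_simp
    ring
  · intro hν2
    rw [hηdd', hηd0]
    have hsum : η₀ + ν ≠ 0 := fun hc => hν2 (by linarith)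
    field_simp
    have hnum : (η₀ ^ 2 * (η₀ + ν) - (ν - η₀) * 0 ^ 2) = η₀ ^ 2 * (η₀ + ν) := by ring
    rw [hnum]
    exact div_ne_zero (mul_ne_zero (pow_ne_zero 2 hη₀) hsum) (mul_ne_zero (pow_ne_zero 2 hη₀) hνη)
end

section
/- Let h : ℝ × ℝ^d → ℝ^d be a map of class C² (jointly in both variables) with h(0, p) = p for all p, and suppose that for every (t, p) the partial derivative in the space variable D_p h(t, p) is an invertible linear map. Define X(p) = ∂_t h(t, p)|_{t=0}, Z(p) = ∂²_t h(t, p)|_{t=0}, and the time-dependent vector fields X_t(p) = (D_p h(t, p))⁻¹ (∂_t h(t, p)). Then for every p, the map t ↦ X_t(p) is differentiable at t = 0 and ∂_t X_t(p)|_{t=0} = Z(p) − DX(p)(X(p)), where DX(p) denotes the derivative of the vector field X at p. -/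
set_option maxHeartbeats 1000000 in
/-- For a `C²` family of diffeomorphisms `h_t` of `ℝ^d` with `h₀ = id`, the
time-dependent vector field `X_t(p) = (D_p h_t(p))⁻¹ (∂_t h_t(p))` is
differentiable in `t` at `t = 0`, with derivative `Y = Z − DX·X`, where
`X(p) = ∂_t h_t(p)|₀` and `Z(p) = ∂²_t h_t(p)|₀`. -/
theorem stmt_12 {d : ℕ}
    (h : ℝ × (Fin d → ℝ) → Fin d → ℝ) (hC2 : ContDiff ℝ 2 h)
    (h0 : ∀ p, h (0, p) = p)
    (Dinv : ℝ → (Fin d → ℝ) → ((Fin d → ℝ) →L[ℝ] (Fin d → ℝ)))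
    (hDinv : ∀ t p,
      (Dinv t p).comp (fderiv ℝ (fun q => h (t, q)) p) =
        ContinuousLinearMap.id ℝ (Fin d → ℝ) ∧
      (fderiv ℝ (fun q => h (t, q)) p).comp (Dinv t p) =
        ContinuousLinearMap.id ℝ (Fin d → ℝ)) :
    ∀ p, HasDerivAt (fun t => Dinv t p (deriv (fun τ => h (τ, p)) t))
      (deriv (fun t => deriv (fun τ => h (τ, p)) t) 0 -
        fderiv ℝ (fun q => deriv (fun t => h (t, q)) 0) p
          (deriv (fun t => h (t, p)) 0)) 0 := by
  intro p
  have hd1 : Differentiable ℝ h := hC2.differentiable (by norm_num)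
  have hf : ContDiff ℝ 1 (fderiv ℝ h) := hC2.fderiv_right (by norm_num)
  have hfd : Differentiable ℝ (fderiv ℝ h) := hf.differentiable (by norm_num)
  set f := fderiv ℝ h with hfdef
  -- the curve t ↦ (t, q)
  have hcurve : ∀ (t : ℝ) (q : (Fin d → ℝ)), HasDerivAt (fun τ : ℝ => (τ, q)) ((1:ℝ), (0 : (Fin d → ℝ))) t :=
    fun t q => (hasDerivAt_id t).prodMk (hasDerivAt_const t q)
  -- time derivative of h
  have hv : ∀ (t : ℝ) (q : (Fin d → ℝ)), HasDerivAt (fun τ => h (τ, q)) (f (t, q) (1, 0)) t :=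
    fun t q => (hd1 (t, q)).hasFDerivAt.comp_hasDerivAt t (hcurve t q)
  -- space derivative of h
  have hA : ∀ t : ℝ, HasFDerivAt (fun q => h (t, q))
      ((f (t, p)).comp (ContinuousLinearMap.inr ℝ ℝ (Fin d → ℝ))) p :=
    fun t => (hd1 (t, p)).hasFDerivAt.comp p (hasFDerivAt_prodMk_right t p)
  set A : ℝ → ((Fin d → ℝ) →L[ℝ] (Fin d → ℝ)) := fun t => (f (t, p)).comp (ContinuousLinearMap.inr ℝ ℝ (Fin d → ℝ)) with hAdef
  have hA0 : A 0 = 1 := by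
    have hid : HasFDerivAt (fun q : (Fin d → ℝ) => h (0, q)) (ContinuousLinearMap.id ℝ (Fin d → ℝ)) p := by
      have : (fun q : (Fin d → ℝ) => h (0, q)) = fun q => q := funext h0
      rw [this]; exact hasFDerivAt_id p
    exact ((hA 0).unique hid).trans ContinuousLinearMap.one_def.symm
  -- Dinv equals Ring.inverse of A
  have hDeq : ∀ t : ℝ, Dinv t p = Ring.inverse (A t) := by
    intro t
    obtain ⟨h1, h2⟩ := hDinv t p
    rw [(hA t).fderiv] at h1 h2
    exact (Ring.inverse_unit (⟨A t, Dinv t p,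
      by simpa [ContinuousLinearMap.mul_def, ContinuousLinearMap.one_def] using h2,
      by simpa [ContinuousLinearMap.mul_def, ContinuousLinearMap.one_def] using h1⟩ :
      ((Fin d → ℝ) →L[ℝ] (Fin d → ℝ))ˣ)).symm
  -- derivative of A at 0
  have hc : HasDerivAt (fun t => f (t, p)) (fderiv ℝ f (0, p) (1, 0)) 0 :=
    (hfd (0, p)).hasFDerivAt.comp_hasDerivAt 0 (hcurve 0 p)
  have hA' : HasDerivAt A ((fderiv ℝ f (0, p) (1, 0)).comp (ContinuousLinearMap.inr ℝ ℝ (Fin d → ℝ))) 0 := by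
    simpa using hc.clm_comp (hasDerivAt_const 0 (ContinuousLinearMap.inr ℝ ℝ (Fin d → ℝ)))
  -- derivative of Ring.inverse ∘ A at 0
  have hinvA : HasDerivAt (fun t => Ring.inverse (A t))
      (-((fderiv ℝ f (0, p) (1, 0)).comp (ContinuousLinearMap.inr ℝ ℝ (Fin d → ℝ)))) 0 := by
    have h1 : HasFDerivAt (Ring.inverse : ((Fin d → ℝ) →L[ℝ] (Fin d → ℝ)) → _)
        (-(ContinuousLinearMap.mulLeftRight ℝ ((Fin d → ℝ) →L[ℝ] (Fin d → ℝ)) ↑(1 : ((Fin d → ℝ) →L[ℝ] (Fin d → ℝ))ˣ)⁻¹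
          ↑(1 : ((Fin d → ℝ) →L[ℝ] (Fin d → ℝ))ˣ)⁻¹)) (A 0) := by
      rw [hA0]; exact hasFDerivAt_ringInverse 1
    have := h1.comp_hasDerivAt 0 hA'
    simp at this; exact this
  -- derivative of v(t) = f (t,p) (1,0)
  have hu : HasDerivAt (fun t => f (t, p) (1, 0)) (fderiv ℝ f (0, p) (1, 0) (1, 0)) 0 := by
    simpa using hc.clm_apply (hasDerivAt_const (0:ℝ) ((1:ℝ), (0:(Fin d → ℝ))))
  -- the product
  have hmain : HasDerivAt (fun t => Ring.inverse (A t) (f (t, p) (1, 0)))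
      (-((fderiv ℝ f (0, p) (1, 0)).comp (ContinuousLinearMap.inr ℝ ℝ (Fin d → ℝ))) (f (0, p) (1, 0))
        + Ring.inverse (A 0) (fderiv ℝ f (0, p) (1, 0) (1, 0))) 0 :=
    hinvA.clm_apply hu
  rw [hA0, Ring.inverse_one] at hmain
  -- identify the target function with the one in hmain
  have hfuneq : (fun t => Dinv t p (deriv (fun τ => h (τ, p)) t))
      = fun t => Ring.inverse (A t) (f (t, p) (1, 0)) := by
    funext t
    rw [hDeq t, (hv t p).deriv]
  rw [hfuneq]
  -- identify the target value
  have e1 : deriv (fun t => deriv (fun τ => h (τ, p)) t) 0 = fderiv ℝ f (0, p) (1, 0) (1, 0) := by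
    have : (fun t => deriv (fun τ => h (τ, p)) t) = fun t => f (t, p) (1, 0) :=
      funext fun t => (hv t p).deriv
    rw [this, hu.deriv]
  have e2 : deriv (fun t => h (t, p)) 0 = f (0, p) (1, 0) := (hv 0 p).deriv
  -- fderiv of q ↦ ∂ₜh(t,q)|₀
  have hB : HasFDerivAt (fun q => f (0, q)) ((fderiv ℝ f (0, p)).comp (ContinuousLinearMap.inr ℝ ℝ (Fin d → ℝ))) p :=
    (hfd (0, p)).hasFDerivAt.comp p (hasFDerivAt_prodMk_right 0 p)
  have hBapp : HasFDerivAt (fun q => f (0, q) (1, 0))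
      ((((fderiv ℝ f (0, p)).comp (ContinuousLinearMap.inr ℝ ℝ (Fin d → ℝ))).flip) ((1:ℝ), (0:(Fin d → ℝ)))) p := by
    simpa using hB.clm_apply (hasFDerivAt_const ((1:ℝ), (0:(Fin d → ℝ))) p)
  have e3 : fderiv ℝ (fun q => deriv (fun t => h (t, q)) 0) p (f (0, p) (1, 0))
      = fderiv ℝ f (0, p) (0, f (0, p) (1, 0)) (1, 0) := by
    have heq : (fun q => deriv (fun t => h (t, q)) 0) = fun q => f (0, q) (1, 0) :=
      funext fun q => (hv 0 q).deriv
    rw [heq, hBapp.fderiv]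
    simp
  -- symmetry of the second derivative
  have hsymm : IsSymmSndFDerivAt ℝ h (0, p) := hC2.contDiffAt.isSymmSndFDerivAt (by norm_num)
  have e4 : fderiv ℝ f (0, p) (1, 0) (0, f (0, p) (1, 0))
      = fderiv ℝ f (0, p) (0, f (0, p) (1, 0)) (1, 0) := hsymm _ _
  rw [e1, e2, e3, ← e4]
  convert hmain using 1
  simp [sub_eq_add_neg, add_comm]
end

section
/- Let μ be a finite Borel measure on ℝ^d and let h : ℝ × ℝ^d → ℝ^d be of class C² (jointly) with h(0, p) = p for all p, such that: D_p h(t, p) is invertible for every (t, p); there is a compact set K ⊆ ℝ^d with h(t, p) = p for every t and every p ∉ K; and for every t the map h_t = h(t, ·) preserves μ (the pushforward of μ under h_t equals μ). Define X_t(p) = (D_p h(t, p))⁻¹ (∂_t h(t, p)). Then for every continuously differentiable function g : ℝ^d → ℝ and every t ∈ ℝ: ∫ D(g ∘ h_t)(p)(X_t(p)) dμ(p) = 0, i.e., the integral of the Lie derivative of g ∘ h_t along X_t vanishes. -/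
open MeasureTheory Metric Set

/-- If a `C²` family of diffeomorphisms `h_t` of `ℝ^d` (equal to the identity
outside a compact set and with `h₀ = id`) preserves a finite Borel measure `μ`,
then for every `C¹` function `g` and every `t`, the integral of the Lie
derivative of `g ∘ h_t` along the tangent field
`X_t(p) = (D_p h_t(p))⁻¹ (∂_t h_t(p))` vanishes. -/
theorem stmt_13 {d : ℕ} (μ : Measure (Fin d → ℝ)) [IsFiniteMeasure μ]
    (h : ℝ × (Fin d → ℝ) → Fin d → ℝ) (hC2 : ContDiff ℝ 2 h)
    (h0 : ∀ p, h (0, p) = p)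
    (Dinv : ℝ → (Fin d → ℝ) → ((Fin d → ℝ) →L[ℝ] (Fin d → ℝ)))
    (hDinv : ∀ t p,
      (Dinv t p).comp (fderiv ℝ (fun q => h (t, q)) p) =
        ContinuousLinearMap.id ℝ (Fin d → ℝ) ∧
      (fderiv ℝ (fun q => h (t, q)) p).comp (Dinv t p) =
        ContinuousLinearMap.id ℝ (Fin d → ℝ))
    (K : Set (Fin d → ℝ)) (hK : IsCompact K)
    (hout : ∀ t p, p ∉ K → h (t, p) = p)
    (hpres : ∀ t, Measure.map (fun p => h (t, p)) μ = μ)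
    (g : (Fin d → ℝ) → ℝ) (hg : ContDiff ℝ 1 g) :
    ∀ t : ℝ,
      ∫ p, fderiv ℝ (fun q => g (h (t, q))) p
          (Dinv t p (deriv (fun τ => h (τ, p)) t)) ∂μ = 0 := by
  intro t
  have hC1 : ContDiff ℝ 1 h := hC2.of_le one_le_two
  have hcont : Continuous h := hC1.continuous
  -- the relevant compact set
  set K' : Set (Fin d → ℝ) := h '' (closedBall t 1 ×ˢ K) ∪ K with hK'def
  have hK'c : IsCompact K' :=
    (((isCompact_closedBall t 1).prod hK).image hcont).union hK
  obtain ⟨R, hRpos, hRsub⟩ : ∃ R, 0 < R ∧ K' ⊆ ball (0 : Fin d → ℝ) R :=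
    hK'c.isBounded.subset_ball_lt 0 0
  -- cutoff
  set bump : ContDiffBump (0 : Fin d → ℝ) := ⟨R, R + 1, hRpos, by linarith⟩ with hbump
  set χ : (Fin d → ℝ) → ℝ := ⇑bump with hχ
  have hχ1 : ∀ x ∈ ball (0 : Fin d → ℝ) R, χ x = 1 := fun x hx =>
    bump.one_of_mem_closedBall (ball_subset_closedBall hx)
  set g' : (Fin d → ℝ) → ℝ := fun p => χ p * g p with hg'def
  have hg'C1 : ContDiff ℝ 1 g' := (bump.contDiff).mul hg
  have hg'cont : Continuous g' := hg'C1.continuous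
  have hg'eq : ∀ x ∈ ball (0 : Fin d → ℝ) R, g' x = g x := fun x hx => by
    simp [hg'def, hχ1 x hx]
  have hg'supp : HasCompactSupport g' := by
    have : HasCompactSupport χ := bump.hasCompactSupport
    exact this.mul_right
  obtain ⟨M, hM⟩ : ∃ M, ∀ x, ‖g' x‖ ≤ M := by
    rcases (hg'cont.norm).exists_forall_ge_of_hasCompactSupport hg'supp.norm with ⟨x₀, hx₀⟩
    exact ⟨‖g' x₀‖, hx₀⟩
  -- composite map
  set Φ : ℝ × (Fin d → ℝ) → ℝ := fun z => g' (h z) with hΦdef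
  have hΦC1 : ContDiff ℝ 1 Φ := hg'C1.comp hC1
  have hΦcont : Continuous Φ := hΦC1.continuous
  have hΦfd : Continuous (fderiv ℝ Φ) := hΦC1.continuous_fderiv one_ne_zero
  set F' : ℝ → (Fin d → ℝ) → ℝ :=
    fun x p => fderiv ℝ Φ (x, p) ((1 : ℝ), (0 : Fin d → ℝ)) with hF'def
  have hF'cont : Continuous (fun z : ℝ × (Fin d → ℝ) => F' z.1 z.2) := by
    exact (hΦfd.clm_apply continuous_const)
  -- key derivative fact
  have key : ∀ (x : ℝ) (p : Fin d → ℝ),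
      HasDerivAt (fun s => Φ (s, p)) (F' x p) x := by
    intro x p
    have h1 : HasFDerivAt Φ (fderiv ℝ Φ (x, p)) (x, p) :=
      (hΦC1.differentiable one_ne_zero _).hasFDerivAt
    have h2 : HasDerivAt (fun s : ℝ => (s, p)) ((1 : ℝ), (0 : Fin d → ℝ)) x :=
      (hasDerivAt_id x).prodMk (hasDerivAt_const x p)
    exact h1.comp_hasDerivAt x h2
  -- F' vanishes off K
  have hF'zero : ∀ (x : ℝ) (p : Fin d → ℝ), p ∉ K → F' x p = 0 := by
    intro x p hp
    have hcst : (fun s => Φ (s, p)) = fun _ => g' p :=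
      funext fun s => by simp [hΦdef, hout s p hp]
    have h' := key x p
    rw [hcst] at h'
    exact h'.unique (hasDerivAt_const _ _)
  -- bound on the compact set
  obtain ⟨C, hC⟩ : ∃ C, ∀ z ∈ (closedBall t 1 ×ˢ K : Set (ℝ × (Fin d → ℝ))),
      ‖F' z.1 z.2‖ ≤ C :=
    ((isCompact_closedBall t 1).prod hK).exists_bound_of_continuousOn
      hF'cont.continuousOn
  set bound : (Fin d → ℝ) → ℝ := K.indicator (fun _ => max C 0) with hbound_def
  have hbound_int : Integrable bound μ :=
    (integrable_const _).indicator hK.measurableSet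
  have h_bound : ∀ p, ∀ x ∈ ball t 1, ‖F' x p‖ ≤ bound p := by
    intro p x hx
    by_cases hp : p ∈ K
    · have h1 : ‖F' x p‖ ≤ C := hC (x, p) ⟨ball_subset_closedBall hx, hp⟩
      rw [hbound_def, indicator_of_mem hp]
      exact h1.trans (le_max_left _ _)
    · simp [hF'zero x p hp, hbound_def, indicator_of_notMem hp]
  -- the parametric integral
  have hmeas : ∀ x : ℝ, AEStronglyMeasurable (fun p => Φ (x, p)) μ := fun x =>
    (hΦcont.comp (continuous_const.prodMk continuous_id)).aestronglyMeasurable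
  have hint : Integrable (fun p => Φ (t, p)) μ := by
    refine (integrable_const M).mono' (hmeas t) (Filter.Eventually.of_forall fun p => ?_)
    exact hM _
  have hF'meas : AEStronglyMeasurable (F' t) μ :=
    (hF'cont.comp (continuous_const.prodMk continuous_id)).aestronglyMeasurable
  obtain ⟨-, hderiv⟩ :=
    hasDerivAt_integral_of_dominated_loc_of_deriv_le (F := fun x p => Φ (x, p))
      (F' := F') (x₀ := t) (bound := bound) (ball_mem_nhds t zero_lt_one)
      (Filter.Eventually.of_forall hmeas) hint hF'meas
      (Filter.Eventually.of_forall h_bound) hbound_int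
      (Filter.Eventually.of_forall fun p x _ => key x p)
  -- constancy of the integral
  have hconst : ∀ x : ℝ, ∫ p, Φ (x, p) ∂μ = ∫ p, g' p ∂μ := by
    intro x
    have hcx : Continuous fun p => h (x, p) := hcont.comp (continuous_const.prodMk continuous_id)
    conv_rhs => rw [← hpres x]
    rw [integral_map hcx.aemeasurable hg'cont.aestronglyMeasurable]
  have hzero : ∫ p, F' t p ∂μ = 0 := by
    have : (fun x => ∫ p, Φ (x, p) ∂μ) = fun _ => ∫ p, g' p ∂μ := funext hconst
    rw [this] at hderiv
    exact hderiv.unique (hasDerivAt_const _ _)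
  -- pointwise identification of the integrand
  have hpt : ∀ p, fderiv ℝ (fun q => g (h (t, q))) p
      (Dinv t p (deriv (fun τ => h (τ, p)) t)) = F' t p := by
    intro p
    by_cases hp : p ∈ K
    · -- the time-derivative vector
      have hτd : DifferentiableAt ℝ (fun τ => h (τ, p)) t :=
        ((hC1.comp (contDiff_id.prodMk contDiff_const)).differentiable one_ne_zero t :)
      set v : Fin d → ℝ := deriv (fun τ => h (τ, p)) t with hv
      have hht : HasDerivAt (fun τ => h (τ, p)) v t := hτd.hasDerivAt
      have hhd : DifferentiableAt ℝ (fun q => h (t, q)) p :=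
        ((hC1.comp (contDiff_const.prodMk contDiff_id)).differentiable one_ne_zero p :)
      have hgd : Differentiable ℝ g := hg.differentiable one_ne_zero
      -- chain rule
      have hcomp : fderiv ℝ (fun q => g (h (t, q))) p =
          (fderiv ℝ g (h (t, p))).comp (fderiv ℝ (fun q => h (t, q)) p) := by
        have := fderiv_comp p (hgd (h (t, p))) hhd
        simpa [Function.comp_def] using this
      have hid : fderiv ℝ (fun q => h (t, q)) p (Dinv t p v) = v := by
        have h2 := (hDinv t p).2
        have := congrArg (fun L : (Fin d → ℝ) →L[ℝ] (Fin d → ℝ) => L v) h2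
        simpa using this
      have step1 : fderiv ℝ (fun q => g (h (t, q))) p (Dinv t p v) =
          fderiv ℝ g (h (t, p)) v := by
        rw [hcomp]; simp [hid]
      -- identify with time-derivative of g ∘ h(·, p)
      have step2 : fderiv ℝ g (h (t, p)) v = deriv (fun τ => g (h (τ, p))) t := by
        have := ((hgd (h (t, p))).hasFDerivAt.comp_hasDerivAt t hht).deriv
        simpa [Function.comp_def] using this.symm
      -- replace g by g' near the trajectory
      have step3 : deriv (fun τ => g (h (τ, p))) t = deriv (fun τ => g' (h (τ, p))) t := by
        apply Filter.EventuallyEq.deriv_eq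
        have hmem : ∀ τ ∈ ball t 1, h (τ, p) ∈ ball (0 : Fin d → ℝ) R := by
          intro τ hτ
          apply hRsub
          exact Or.inl ⟨(τ, p), ⟨ball_subset_closedBall hτ, hp⟩, rfl⟩
        filter_upwards [ball_mem_nhds t zero_lt_one] with τ hτ
        exact (hg'eq _ (hmem τ hτ)).symm
      have step4 : deriv (fun τ => g' (h (τ, p))) t = F' t p := (key t p).deriv
      rw [step1, step2, step3, step4]
    · have hcst : (fun τ => h (τ, p)) = fun _ => p := funext fun τ => hout τ p hp
      rw [hF'zero t p hp, hcst, deriv_const]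
      simp
  calc ∫ p, fderiv ℝ (fun q => g (h (t, q))) p
        (Dinv t p (deriv (fun τ => h (τ, p)) t)) ∂μ
      = ∫ p, F' t p ∂μ := by exact integral_congr_ae (Filter.Eventually.of_forall hpt)
    _ = 0 := hzero
end

section
/- Let (M, μ) be a measure space with μ(M) < ∞, let s ∈ (0, 1] and K ≥ 0, and let g : ℝ × M → ℝ be such that for every t the map p ↦ g(t, p) is measurable, g(0, p) = 1 for all p, and |g(t, p) − g(t′, p)| ≤ K·|t − t′|^s for all t, t′, p. Then for every t with K·|t|^s ≤ 1/2, the function p ↦ log g(t, p) is well defined (g(t, p) ≥ 1/2) and |∫ log g(t, p) dμ(p) − (∫ g(t, p) dμ(p) − μ(M))| ≤ 2·K²·μ(M)·|t|^{2s}. Consequently, if s > 1/2 and the function G(t) = ∫ g(t, p) dμ(p) is differentiable at t = 0, then H(t) = ∫ log g(t, p) dμ(p) is differentiable at t = 0 with H′(0) = G′(0). -/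
open MeasureTheory

lemma log_est_aux {x : ℝ} (hx : |x - 1| ≤ 1/2) :
    |Real.log x - (x - 1)| ≤ 2 * (x - 1)^2 := by
  have h1 : |1 - x| < 1 := by rw [abs_sub_comm]; linarith [hx]
  have h := Real.abs_log_sub_add_sum_range_le h1 1
  simp only [Finset.sum_range_one, pow_one, Nat.cast_zero, zero_add, div_one,
    sub_sub_cancel] at h
  have heq : Real.log x - (x - 1) = (1 - x) + Real.log x := by ring
  rw [heq]
  refine h.trans ?_
  have hx' : |1 - x| ≤ 1/2 := by rwa [abs_sub_comm]
  have hpos : (0:ℝ) < 1 - |1 - x| := by linarith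
  rw [div_le_iff₀ hpos]
  have hsq : |1 - x| ^ (1 + 1) = (x - 1)^2 := by
    rw [abs_sub_comm, show (1:ℕ) + 1 = 2 from rfl, sq_abs]
  rw [hsq]
  nlinarith [sq_nonneg (x - 1)]

lemma tendsto_abs_rpow_zero {q : ℝ} (hq : 0 < q) :
    Filter.Tendsto (fun t : ℝ => |t| ^ q) (nhds 0) (nhds 0) := by
  have h0 : ContinuousAt (fun x : ℝ => x ^ q) |(0:ℝ)| := by
    simp only [abs_zero]
    exact Real.continuousAt_rpow_const 0 q (Or.inr hq.le)
  have h1 := (h0.comp continuous_abs.continuousAt).tendsto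
  simpa [Function.comp_def, Real.zero_rpow hq.ne'] using h1

/-- If `g(t,·)` is uniformly `s`-Hölder in `t` with constant `K` and `g(0,·) = 1`,
then for `K·|t|^s ≤ 1/2` the function `log g(t,·)` is well defined and
`∫ log g(t,p) dμ` differs from `∫ g(t,p) dμ − μ(M)` by at most `2K²μ(M)|t|^{2s}`.
Consequently, for `s > 1/2`, if `G(t) = ∫ g(t,p) dμ` is differentiable at `0`,
so is `H(t) = ∫ log g(t,p) dμ`, with the same derivative. -/
theorem stmt_14 {M : Type*} [MeasurableSpace M] (μ : Measure M) [IsFiniteMeasure μ]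
    (s K : ℝ) (hs : s ∈ Set.Ioc (0:ℝ) 1) (hK : 0 ≤ K)
    (g : ℝ → M → ℝ) (hmeas : ∀ t, Measurable (g t))
    (hg0 : ∀ p, g 0 p = 1)
    (hhol : ∀ t t' : ℝ, ∀ p, |g t p - g t' p| ≤ K * |t - t'| ^ s) :
    (∀ t : ℝ, K * |t| ^ s ≤ 1 / 2 →
      (∀ p, (1:ℝ) / 2 ≤ g t p) ∧
      |(∫ p, Real.log (g t p) ∂μ) - ((∫ p, g t p ∂μ) - (μ Set.univ).toReal)| ≤
        2 * K ^ 2 * (μ Set.univ).toReal * |t| ^ (2 * s)) ∧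
    (1 / 2 < s → ∀ G' : ℝ, HasDerivAt (fun t => ∫ p, g t p ∂μ) G' 0 →
      HasDerivAt (fun t => ∫ p, Real.log (g t p) ∂μ) G' 0) := by
  obtain ⟨hs0, hs1⟩ := hs
  set μr := (μ Set.univ).toReal with hμr
  have hμr0 : 0 ≤ μr := ENNReal.toReal_nonneg
  have key : ∀ t : ℝ, K * |t| ^ s ≤ 1/2 →
      (∀ p, (1:ℝ)/2 ≤ g t p) ∧
      |(∫ p, Real.log (g t p) ∂μ) - ((∫ p, g t p ∂μ) - μr)| ≤
        2 * K ^ 2 * μr * |t| ^ (2 * s) := by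
    intro t ht
    have hKt : 0 ≤ K * |t| ^ s := mul_nonneg hK (Real.rpow_nonneg (abs_nonneg t) s)
    have hdist : ∀ p, |g t p - 1| ≤ K * |t| ^ s := by
      intro p
      have := hhol t 0 p
      simpa [hg0 p] using this
    have hhalf : ∀ p, (1:ℝ)/2 ≤ g t p := by
      intro p
      have h := (abs_le.1 (hdist p)).1
      linarith
    refine ⟨hhalf, ?_⟩
    have hptw : ∀ p, |Real.log (g t p) - (g t p - 1)| ≤ 2 * (K * |t| ^ s)^2 := by
      intro p
      have h1 : |g t p - 1| ≤ 1/2 := (hdist p).trans ht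
      refine (log_est_aux h1).trans ?_
      have h2 : (g t p - 1)^2 ≤ (K * |t| ^ s)^2 := by
        rw [← sq_abs (g t p - 1)]
        exact pow_le_pow_left₀ (abs_nonneg _) (hdist p) 2
      linarith
    have hb : ∀ p, ‖g t p‖ ≤ 1 + K * |t| ^ s := by
      intro p
      rw [Real.norm_eq_abs]
      have := abs_le.1 (hdist p)
      rw [abs_le]; constructor <;> linarith [this.1, this.2]
    have int_g : Integrable (g t) μ :=
      ⟨(hmeas t).aestronglyMeasurable,
        HasFiniteIntegral.of_bounded (C := 1 + K * |t| ^ s) (ae_of_all _ hb)⟩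
    have int_log : Integrable (fun p => Real.log (g t p)) μ := by
      refine ⟨(Real.measurable_log.comp (hmeas t)).aestronglyMeasurable,
        HasFiniteIntegral.of_bounded (C := 1) (ae_of_all _ fun p => ?_)⟩
      have h1 := hptw p
      have h2 := abs_le.1 (hdist p)
      have h3 : (K * |t| ^ s)^2 ≤ 1/4 := by nlinarith
      rw [Real.norm_eq_abs]
      have := abs_sub_abs_le_abs_sub (Real.log (g t p)) (g t p - 1)
      have h4 : |g t p - 1| ≤ 1/2 := (hdist p).trans ht
      linarith [abs_le.1 (hdist p)]
    have int_gm1 : Integrable (fun p => g t p - 1) μ := int_g.sub (integrable_const 1)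
    have heq : (∫ p, (Real.log (g t p) - (g t p - 1)) ∂μ)
        = (∫ p, Real.log (g t p) ∂μ) - ((∫ p, g t p ∂μ) - μr) := by
      rw [integral_sub int_log int_gm1, integral_sub int_g (integrable_const 1),
        integral_const]
      simp [hμr, measureReal_def]
    rw [← heq]
    have hbnd := norm_integral_le_of_norm_le_const (μ := μ)
      (f := fun p => Real.log (g t p) - (g t p - 1)) (C := 2 * (K * |t| ^ s)^2)
      (ae_of_all _ fun p => by rw [Real.norm_eq_abs]; exact hptw p)
    rw [Real.norm_eq_abs] at hbnd
    refine hbnd.trans (le_of_eq ?_)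
    have hpow : (|t| ^ s)^(2:ℕ) = |t| ^ (2 * s) := by
      rw [← Real.rpow_natCast (|t| ^ s) 2, ← Real.rpow_mul (abs_nonneg t)]
      norm_num [mul_comm]
    rw [mul_pow, hpow, measureReal_def]; ring
  refine ⟨key, ?_⟩
  intro hs2 G' hG
  have H0 : (∫ p, Real.log (g 0 p) ∂μ) = 0 := by simp [hg0]
  have G0 : (∫ p, g 0 p ∂μ) = μr := by
    simp only [hg0]
    rw [integral_const]; simp [hμr, measureReal_def]
  have hcont : Filter.Tendsto (fun t : ℝ => K * |t| ^ s) (nhds 0) (nhds 0) := by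
    have h2 := (tendsto_abs_rpow_zero hs0).const_mul K
    simpa using h2
  have hev : ∀ᶠ t in nhds 0, K * |t| ^ s ≤ 1/2 :=
    (hcont.eventually_lt_const (by norm_num : (0:ℝ) < 1/2)).mono fun t h => h.le
  have ho : (fun t : ℝ => |t| ^ (2 * s)) =o[nhds 0] (fun t : ℝ => t - 0) := by
    simp only [sub_zero]
    rw [Asymptotics.isLittleO_iff]
    intro c hc
    have htend : Filter.Tendsto (fun t : ℝ => |t| ^ (2 * s - 1)) (nhds 0) (nhds 0) :=
      tendsto_abs_rpow_zero (by linarith)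
    filter_upwards [htend.eventually_lt_const hc] with t ht
    rcases eq_or_ne t 0 with rfl | ht0
    · simp [Real.zero_rpow (by positivity : 2 * s ≠ 0)]
    · have habs : (0:ℝ) < |t| := abs_pos.mpr ht0
      have hsplit : |t| ^ (2 * s) = |t| ^ (2 * s - 1) * |t| := by
        have h := Real.rpow_add habs (2 * s - 1) 1
        rw [Real.rpow_one] at h
        rw [← h]; congr 1; ring
      rw [Real.norm_eq_abs, Real.norm_eq_abs,
        abs_of_nonneg (Real.rpow_nonneg (abs_nonneg t) _), hsplit]
      exact mul_le_mul_of_nonneg_right ht.le (abs_nonneg t)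
  have hD : HasDerivAt (fun t => (∫ p, Real.log (g t p) ∂μ) - (∫ p, g t p ∂μ)) 0 0 := by
    rw [hasDerivAt_iff_isLittleO]
    refine Asymptotics.IsBigO.trans_isLittleO ?_ ho
    rw [Asymptotics.isBigO_iff]
    refine ⟨2 * K ^ 2 * μr, ?_⟩
    filter_upwards [hev] with t ht
    have hkey := (key t ht).2
    rw [Real.norm_eq_abs, Real.norm_eq_abs, H0, G0,
      abs_of_nonneg (Real.rpow_nonneg (abs_nonneg t) _)]
    simp only [smul_zero, sub_zero, zero_sub, sub_neg_eq_add]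
    calc |(∫ p, Real.log (g t p) ∂μ) - (∫ p, g t p ∂μ) + μr|
        = |(∫ p, Real.log (g t p) ∂μ) - ((∫ p, g t p ∂μ) - μr)| := by ring_nf
      _ ≤ 2 * K ^ 2 * μr * |t| ^ (2 * s) := hkey
  have hsum := hG.add hD
  have hfun : (fun t => (∫ p, g t p ∂μ) +
      ((∫ p, Real.log (g t p) ∂μ) - (∫ p, g t p ∂μ)))
      = fun t => ∫ p, Real.log (g t p) ∂μ := by
    funext t; ring
  rw [show ((fun t => ∫ p, g t p ∂μ) + fun t => (∫ p, Real.log (g t p) ∂μ) - ∫ p, g t p ∂μ)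
      = fun t => ∫ p, Real.log (g t p) ∂μ from hfun, add_zero] at hsum
  exact hsum
end
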